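/- arXiv:2509.24747 — 3 statements merged into one kernel-verified Lean document; each statement's English description precedes it below -/
import Mathlib

section
/- Let v ∈ 𝒰(I) be a threshold utility satisfying the Inada-type condition liminf_{x↑sup I} v′(x) = 0 or limsup_{x↓inf I} v′(x) = ∞. Then the only positively homogeneous v-Meyer risk measure on 𝒳 is the worst-case risk measure: a positively homogeneous monetary risk measure ρ on 𝒳 is v-SD-consistent if and only if ρ(X) = ρ^w(X) = ess sup(−X) for all X ∈ 𝒳. -/
open MeasureTheory Filter Set

noncomputable section

namespace Paper

variable {Ω : Type*} [MeasurableSpace Ω]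

/-- The probability measure `P` is atomless. -/
def Atomless (P : Measure Ω) : Prop :=
  ∀ s : Set Ω, MeasurableSet s → 0 < P s →
    ∃ t : Set Ω, MeasurableSet t ∧ t ⊆ s ∧ 0 < P t ∧ P t < P s

/-- `𝒳`: the essentially bounded random variables. -/
def MemX (P : Measure Ω) (X : Ω → ℝ) : Prop :=
  Measurable X ∧ ∃ C : ℝ, ∀ᵐ ω ∂P, |X ω| ≤ C

/-- `𝒰(I)`: twice differentiable functions with everywhere positive first
derivative on `I`. -/
def IsUtility (I : Set ℝ) (u : ℝ → ℝ) : Prop :=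
  (∀ x ∈ I, DifferentiableAt ℝ u x) ∧
  (∀ x ∈ I, DifferentiableAt ℝ (deriv u) x) ∧
  (∀ x ∈ I, 0 < deriv u x)

/-- Arrow–Pratt coefficient of absolute risk aversion. -/
def RA (u : ℝ → ℝ) (x : ℝ) : ℝ := -deriv (deriv u) x / deriv u x

/-- `𝓛¹_v`: `I`-valued random variables `X` with `v(X)` integrable. -/
def MemL1 (P : Measure Ω) (I : Set ℝ) (v : ℝ → ℝ) (X : Ω → ℝ) : Prop :=
  Measurable X ∧ (∀ᵐ ω ∂P, X ω ∈ I) ∧ Integrable (fun ω => v (X ω)) P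

/-- The `v`-SD order: `X ≤_{v-SD} Y`. -/
def vSD (P : Measure Ω) (I : Set ℝ) (v : ℝ → ℝ) (X Y : Ω → ℝ) : Prop :=
  ∀ u : ℝ → ℝ, IsUtility I u → (∀ x ∈ I, RA v x ≤ RA u x) →
    Integrable (fun ω => u (X ω)) P → Integrable (fun ω => u (Y ω)) P →
    ∫ ω, u (X ω) ∂P ≤ ∫ ω, u (Y ω) ∂P

/-- Second-order stochastic dominance. -/
def SSD (P : Measure Ω) (X Y : Ω → ℝ) : Prop :=
  ∀ u : ℝ → ℝ, IsUtility Set.univ u → ConcaveOn ℝ Set.univ u →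
    Integrable (fun ω => u (X ω)) P → Integrable (fun ω => u (Y ω)) P →
    ∫ ω, u (X ω) ∂P ≤ ∫ ω, u (Y ω) ∂P

/-- Monetary risk measure: antitone and cash-additive on `𝒳`. -/
def IsRiskMeasure (P : Measure Ω) (ρ : (Ω → ℝ) → ℝ) : Prop :=
  (∀ X Y : Ω → ℝ, MemX P X → MemX P Y → (∀ᵐ ω ∂P, X ω ≤ Y ω) → ρ Y ≤ ρ X) ∧
  (∀ X : Ω → ℝ, MemX P X → ∀ c : ℝ, ρ (fun ω => X ω + c) = ρ X - c)

/-- Worst-case risk measure `ρ^w(X) = ess sup (-X)`. -/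
def rhoW (P : Measure Ω) (X : Ω → ℝ) : ℝ :=
  sInf {m : ℝ | ∀ᵐ ω ∂P, -X ω ≤ m}

/-- `v`-SD-consistency of `φ` on the domain `D`. -/
def VSDConsistent (P : Measure Ω) (I : Set ℝ) (v : ℝ → ℝ)
    (D : Set (Ω → ℝ)) (φ : (Ω → ℝ) → ℝ) : Prop :=
  ∀ X Y : Ω → ℝ, X ∈ D → Y ∈ D → MemL1 P I v X → MemL1 P I v Y →
    vSD P I v X Y → φ Y ≤ φ X

/-- `𝒞`: the a.s. strictly positive bounded random variables. -/
def MemC (P : Measure Ω) (X : Ω → ℝ) : Prop :=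
  MemX P X ∧ ∀ᵐ ω ∂P, 0 < X ω

/-- `𝓔 = {e^Y : Y ∈ 𝒳}` (up to a.s. equality). -/
def MemE (P : Measure Ω) (X : Ω → ℝ) : Prop :=
  ∃ Y : Ω → ℝ, MemX P Y ∧ ∀ᵐ ω ∂P, X ω = Real.exp (Y ω)

/-- Return risk measure. -/
def IsRRM (P : Measure Ω) (η : (Ω → ℝ) → ℝ) : Prop :=
  (∀ X : Ω → ℝ, MemC P X → 0 < η X) ∧
  (∀ X Y : Ω → ℝ, MemC P X → MemC P Y → (∀ᵐ ω ∂P, X ω ≤ Y ω) → η Y ≤ η X) ∧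
  (∀ X : Ω → ℝ, MemC P X → ∀ t : ℝ, 0 < t → η (fun ω => t * X ω) = t⁻¹ * η X)

/-- Loss-based return risk measure. -/
def IsLossRRM (P : Measure Ω) (κ : (Ω → ℝ) → ℝ) : Prop :=
  (∀ L : Ω → ℝ, MemC P L → 0 < κ L) ∧
  (∀ L L' : Ω → ℝ, MemC P L → MemC P L' → (∀ᵐ ω ∂P, L' ω ≤ L ω) → κ L' ≤ κ L) ∧
  (∀ L : Ω → ℝ, MemC P L → ∀ t : ℝ, 0 < t → κ (fun ω => t * L ω) = t * κ L)

/-- Base risk measure `ρ_{Z,v}`. -/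
def baseRM (P : Measure Ω) (v : ℝ → ℝ) (Z X : Ω → ℝ) : ℝ :=
  sInf {m : ℝ | vSD P Set.univ v Z (fun ω => X ω + m)}

/-- Lower quantile function. -/
def qf (P : Measure Ω) (X : Ω → ℝ) (r : ℝ) : ℝ :=
  sInf {x : ℝ | r ≤ (P {ω | X ω ≤ x}).toReal}

/-- Expected Shortfall at level `p`. -/
def ES (P : Measure Ω) (p : ℝ) (X : Ω → ℝ) : ℝ :=
  if p < 1 then -(1 / (1 - p)) * ∫ r in (0:ℝ)..(1 - p), qf P X r
  else rhoW P X


set_option linter.unusedSectionVars false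
set_option linter.unusedVariables false

section AuxCalc
variable {I : Set ℝ} {u v : ℝ → ℝ}

lemma utility_monotoneOn (hIconn : I.OrdConnected) (hIopen : IsOpen I)
    (hu : IsUtility I u) : MonotoneOn u I := by
  apply monotoneOn_of_deriv_nonneg hIconn.convex
  · intro x hx; exact (hu.1 x hx).continuousAt.continuousWithinAt
  · intro x hx; rw [hIopen.interior_eq] at hx; exact (hu.1 x hx).differentiableWithinAt
  · intro x hx; rw [hIopen.interior_eq] at hx; exact (hu.2.2 x hx).le

lemma ratio_antitoneOn (hIconn : I.OrdConnected) (hIopen : IsOpen I)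
    (hv : IsUtility I v) (hu : IsUtility I u) (hRA : ∀ x ∈ I, RA v x ≤ RA u x) :
    AntitoneOn (fun t => deriv u t / deriv v t) I := by
  have hdiff : ∀ x ∈ I, HasDerivAt (fun t => deriv u t / deriv v t)
      ((deriv (deriv u) x * deriv v x - deriv u x * deriv (deriv v) x) / (deriv v x)^2) x := by
    intro x hx
    exact ((hu.2.1 x hx).hasDerivAt).div ((hv.2.1 x hx).hasDerivAt) (ne_of_gt (hv.2.2 x hx))
  apply antitoneOn_of_deriv_nonpos hIconn.convex
  · intro x hx; exact (hdiff x hx).differentiableAt.continuousAt.continuousWithinAt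
  · intro x hx; rw [hIopen.interior_eq] at hx
    exact (hdiff x hx).differentiableAt.differentiableWithinAt
  · intro x hx; rw [hIopen.interior_eq] at hx
    rw [(hdiff x hx).deriv]
    apply div_nonpos_of_nonpos_of_nonneg _ (sq_nonneg _)
    have h1 := hRA x hx
    have hu' := hu.2.2 x hx
    have hv' := hv.2.2 x hx
    unfold RA at h1
    rw [div_le_div_iff₀ hv' hu'] at h1
    nlinarith

/-- chord bound: for `b' ≤ b` in `I`, `u b - u b' ≤ (u'(b')/v'(b')) * (v b - v b')`. -/
lemma chord_upper (hIconn : I.OrdConnected) (hIopen : IsOpen I)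
    (hv : IsUtility I v) (hu : IsUtility I u) (hRA : ∀ x ∈ I, RA v x ≤ RA u x)
    {b' b : ℝ} (hb' : b' ∈ I) (hb : b ∈ I) (hle : b' ≤ b) :
    u b - u b' ≤ (deriv u b' / deriv v b') * (v b - v b') := by
  have hr := ratio_antitoneOn hIconn hIopen hv hu hRA
  set r := fun t => deriv u t / deriv v t with hrdef
  have key : MonotoneOn (fun t => r b' * v t - u t) (I ∩ Ici b') := by
    apply monotoneOn_of_deriv_nonneg (hIconn.convex.inter (convex_Ici _))
    · intro x hx
      exact (((hv.1 x hx.1).const_mul _).sub (hu.1 x hx.1)).continuousAt.continuousWithinAt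
    · intro x hx
      have hx' := interior_subset hx
      exact (((hv.1 x hx'.1).const_mul _).sub (hu.1 x hx'.1)).differentiableWithinAt
    · intro x hx
      have hx' := interior_subset hx
      have hd : HasDerivAt (fun t => r b' * v t - u t) (r b' * deriv v x - deriv u x) x :=
        ((hv.1 x hx'.1).hasDerivAt.const_mul _).sub (hu.1 x hx'.1).hasDerivAt
      rw [hd.deriv]
      have hrx : r x ≤ r b' := hr hb' hx'.1 hx'.2
      have hv' := hv.2.2 x hx'.1
      have : deriv u x = r x * deriv v x := by
        simp only [hrdef]; field_simp
      nlinarith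
  have h1 := key ⟨hb', self_mem_Ici⟩ ⟨hb, hle⟩ hle
  simp only at h1; linarith

lemma chord_lower (hIconn : I.OrdConnected) (hIopen : IsOpen I)
    (hv : IsUtility I v) (hu : IsUtility I u) (hRA : ∀ x ∈ I, RA v x ≤ RA u x)
    {a a' : ℝ} (ha : a ∈ I) (ha' : a' ∈ I) (hle : a ≤ a') :
    (deriv u a' / deriv v a') * (v a' - v a) ≤ u a' - u a := by
  have hr := ratio_antitoneOn hIconn hIopen hv hu hRA
  set r := fun t => deriv u t / deriv v t with hrdef
  have key : MonotoneOn (fun t => u t - r a' * v t) (I ∩ Iic a') := by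
    apply monotoneOn_of_deriv_nonneg (hIconn.convex.inter (convex_Iic _))
    · intro x hx
      exact ((hu.1 x hx.1).sub ((hv.1 x hx.1).const_mul _)).continuousAt.continuousWithinAt
    · intro x hx
      have hx' := interior_subset hx
      exact ((hu.1 x hx'.1).sub ((hv.1 x hx'.1).const_mul _)).differentiableWithinAt
    · intro x hx
      have hx' := interior_subset hx
      have hd : HasDerivAt (fun t => u t - r a' * v t) (deriv u x - r a' * deriv v x) x :=
        (hu.1 x hx'.1).hasDerivAt.sub ((hv.1 x hx'.1).hasDerivAt.const_mul _)
      rw [hd.deriv]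
      have hrx : r a' ≤ r x := hr hx'.1 ha' hx'.2
      have hv' := hv.2.2 x hx'.1
      have : deriv u x = r x * deriv v x := by
        simp only [hrdef]; field_simp
      nlinarith
  have h1 := key ⟨ha, hle⟩ ⟨ha', self_mem_Iic⟩ hle
  simp only at h1; linarith

/-- The core inequality for two-point comparisons. -/
lemma pair_ineq (hIconn : I.OrdConnected) (hIopen : IsOpen I)
    (hv : IsUtility I v) (hu : IsUtility I u) (hRA : ∀ x ∈ I, RA v x ≤ RA u x)
    {a a' b' b : ℝ} (ha : a ∈ I) (hb : b ∈ I)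
    (h1 : a ≤ a') (h2 : a' ≤ b') (h3 : b' ≤ b)
    {PB q : ℝ} (hPB : 0 ≤ PB) (hq : 0 ≤ q)
    (hkey : PB * (v b - v b') ≤ q * (v a' - v a)) :
    PB * u b + q * u a ≤ PB * u b' + q * u a' := by
  have ha' : a' ∈ I := hIconn.out ha hb ⟨h1, le_trans h2 h3⟩
  have hb' : b' ∈ I := hIconn.out ha hb ⟨le_trans h1 h2, h3⟩
  have hA := chord_upper hIconn hIopen hv hu hRA hb' hb h3
  have hB := chord_lower hIconn hIopen hv hu hRA ha ha' h1
  have hC : deriv u b' / deriv v b' ≤ deriv u a' / deriv v a' :=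
    ratio_antitoneOn hIconn hIopen hv hu hRA ha' hb' h2
  have hmono := utility_monotoneOn hIconn hIopen hv
  have hva : v a ≤ v a' := hmono ha ha' h1
  have hvb : v b' ≤ v b := hmono hb' hb h3
  have hrb : 0 ≤ deriv u b' / deriv v b' :=
    le_of_lt (div_pos (hu.2.2 b' hb') (hv.2.2 b' hb'))
  set rb := deriv u b' / deriv v b'
  set ra := deriv u a' / deriv v a'
  have s1 : PB * (u b - u b') ≤ PB * (rb * (v b - v b')) :=
    mul_le_mul_of_nonneg_left hA hPB
  have s2 : rb * (PB * (v b - v b')) ≤ rb * (q * (v a' - v a)) :=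
    mul_le_mul_of_nonneg_left hkey hrb
  have s3 : q * (rb * (v a' - v a)) ≤ q * (ra * (v a' - v a)) := by
    apply mul_le_mul_of_nonneg_left _ hq
    exact mul_le_mul_of_nonneg_right hC (by linarith)
  have s4 : q * (ra * (v a' - v a)) ≤ q * (u a' - u a) :=
    mul_le_mul_of_nonneg_left hB hq
  nlinarith [s1, s2, s3, s4]

lemma vdiff_le (hIconn : I.OrdConnected) (hv : IsUtility I v)
    {s t K : ℝ} (hs : s ∈ I) (ht : t ∈ I) (hst : s ≤ t)
    (hK : ∀ x ∈ Icc s t, deriv v x ≤ K) : v t - v s ≤ K * (t - s) := by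
  have hIcc : Icc s t ⊆ I := fun x hx => hIconn.out hs ht hx
  have hcont : ContinuousOn (deriv v) (Icc s t) :=
    fun x hx => ((hv.2.1 x (hIcc hx)).continuousAt).continuousWithinAt
  have hint : IntervalIntegrable (deriv v) volume s t := by
    apply ContinuousOn.intervalIntegrable
    rwa [uIcc_of_le hst]
  have heq : ∫ y in s..t, deriv v y = v t - v s := by
    apply intervalIntegral.integral_deriv_eq_sub _ hint
    intro x hx
    rw [uIcc_of_le hst] at hx
    exact hv.1 x (hIcc hx)
  have hle : ∫ y in s..t, deriv v y ≤ ∫ _ in s..t, K :=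
    intervalIntegral.integral_mono_on hst hint intervalIntegrable_const hK
  rw [heq, intervalIntegral.integral_const, smul_eq_mul] at hle
  linarith

lemma vdiff_ge (hIconn : I.OrdConnected) (hv : IsUtility I v)
    {s t k : ℝ} (hs : s ∈ I) (ht : t ∈ I) (hst : s ≤ t)
    (hk : ∀ x ∈ Icc s t, k ≤ deriv v x) : k * (t - s) ≤ v t - v s := by
  have hIcc : Icc s t ⊆ I := fun x hx => hIconn.out hs ht hx
  have hcont : ContinuousOn (deriv v) (Icc s t) :=
    fun x hx => ((hv.2.1 x (hIcc hx)).continuousAt).continuousWithinAt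
  have hint : IntervalIntegrable (deriv v) volume s t := by
    apply ContinuousOn.intervalIntegrable
    rwa [uIcc_of_le hst]
  have heq : ∫ y in s..t, deriv v y = v t - v s := by
    apply intervalIntegral.integral_deriv_eq_sub _ hint
    intro x hx
    rw [uIcc_of_le hst] at hx
    exact hv.1 x (hIcc hx)
  have hle : ∫ _ in s..t, k ≤ ∫ y in s..t, deriv v y :=
    intervalIntegral.integral_mono_on hst intervalIntegrable_const hint hk
  rw [heq, intervalIntegral.integral_const, smul_eq_mul] at hle
  linarith

set_option maxHeartbeats 1000000 in
lemma geometry (hIopen : IsOpen I) (hIconn : I.OrdConnected) (hIne : I.Nonempty)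
    (hv : IsUtility I v)
    (hInada : (∀ ε : ℝ, 0 < ε → ∀ b ∈ I, ∃ x ∈ I, b ≤ x ∧ deriv v x < ε) ∨
      (∀ M : ℝ, ∀ b ∈ I, ∃ x ∈ I, x ≤ b ∧ M < deriv v x))
    {PB q δ : ℝ} (hPB0 : 0 < PB) (hq0 : 0 < q) (hδ : 0 < δ) :
    ∃ a a' b' b : ℝ, a ∈ I ∧ b ∈ I ∧ a < a' ∧ a' < b' ∧ b' < b ∧
      PB * (v b - v b') ≤ q * (v a' - v a) ∧
      (1 + δ) * (a' - a) < δ * (b - b') := by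
  obtain ⟨j₁, hj₁⟩ := hIne
  obtain ⟨r, hr0, hball⟩ := Metric.isOpen_iff.mp hIopen j₁ hj₁
  obtain ⟨j₂, hj₂def⟩ : ∃ j₂ : ℝ, j₂ = j₁ + r/2 := ⟨_, rfl⟩
  have hj₂ : j₂ ∈ I := by
    apply hball; rw [Metric.mem_ball, Real.dist_eq, hj₂def]
    rw [show j₁ + r/2 - j₁ = r/2 by ring, abs_of_nonneg (by linarith)]; linarith
  have hj12 : j₁ < j₂ := by rw [hj₂def]; linarith
  have hIcc : Icc j₁ j₂ ⊆ I := fun x hx => hIconn.out hj₁ hj₂ hx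
  have hvcont : ContinuousOn (deriv v) (Icc j₁ j₂) :=
    fun x hx => ((hv.2.1 x (hIcc hx)).continuousAt).continuousWithinAt
  rcases hInada with hIn1 | hIn2
  · -- Case 1: derivative gets small to the right
    obtain ⟨t₀, ht₀, ht₀min⟩ :=
      isCompact_Icc.exists_isMinOn (nonempty_Icc.mpr hj12.le) hvcont
    obtain ⟨k, hkdef⟩ : ∃ k : ℝ, k = deriv v t₀ := ⟨_, rfl⟩
    have hk0 : 0 < k := hkdef ▸ hv.2.2 t₀ (hIcc ht₀)
    obtain ⟨m₀, hm₀def⟩ : ∃ m₀ : ℝ, m₀ = min ((j₂ - j₁)/2) (δ/(2*(1+δ))) := ⟨_, rfl⟩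
    have hm₀ : 0 < m₀ := by rw [hm₀def]; exact lt_min (by linarith) (by positivity)
    have hm₀a : m₀ ≤ (j₂ - j₁)/2 := hm₀def ▸ min_le_left _ _
    have hm₀b : m₀ ≤ δ/(2*(1+δ)) := hm₀def ▸ min_le_right _ _
    obtain ⟨ε, hεdef⟩ : ∃ ε : ℝ, ε = q * k * m₀ / PB := ⟨_, rfl⟩
    have hε : 0 < ε := by rw [hεdef]; positivity
    obtain ⟨x, hxI, hxge, hxlt⟩ := hIn1 ε hε j₂ hj₂
    have hs : I ∩ (deriv v)⁻¹' (Iio ε) ∈ nhds x :=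
      Filter.inter_mem (hIopen.mem_nhds hxI)
        (((hv.2.1 x hxI).continuousAt).preimage_mem_nhds (Iio_mem_nhds hxlt))
    obtain ⟨η, hη0, hηsub⟩ := Metric.mem_nhds_iff.mp hs
    obtain ⟨h, hhdef⟩ : ∃ h : ℝ, h = min (η/2) 1 := ⟨_, rfl⟩
    have hh0 : 0 < h := by rw [hhdef]; exact lt_min (by linarith) one_pos
    have hh1 : h ≤ 1 := hhdef ▸ min_le_right _ _
    have hhη : h ≤ η/2 := hhdef ▸ min_le_left _ _
    have hsub : Icc x (x + h) ⊆ I ∩ (deriv v)⁻¹' (Iio ε) := by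
      intro t ht
      apply hηsub
      rw [Metric.mem_ball, Real.dist_eq, abs_of_nonneg (by linarith [ht.1])]
      have : t - x ≤ h := by linarith [ht.2]
      linarith
    have hbI : x + h ∈ I := (hsub ⟨by linarith, le_rfl⟩).1
    obtain ⟨ℓ, hℓdef⟩ : ∃ ℓ : ℝ, ℓ = min ((j₂ - j₁)/2) (δ*h/(2*(1+δ))) := ⟨_, rfl⟩
    have hℓ0 : 0 < ℓ := by rw [hℓdef]; exact lt_min (by linarith) (by positivity)
    have hℓa : ℓ ≤ (j₂ - j₁)/2 := hℓdef ▸ min_le_left _ _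
    have hℓb : ℓ ≤ δ*h/(2*(1+δ)) := hℓdef ▸ min_le_right _ _
    have ha'lt : j₁ + ℓ < j₂ := by linarith
    have ha'I : j₁ + ℓ ∈ I := hIcc ⟨by linarith, ha'lt.le⟩
    refine ⟨j₁, j₁ + ℓ, x, x + h, hj₁, hbI, by linarith, by linarith, by linarith, ?_, ?_⟩
    · have hdrop : v (x + h) - v x ≤ ε * h := by
        have h2 := vdiff_le hIconn hv hxI hbI (by linarith)
          (fun t ht => (hsub ht).2.le)
        calc v (x+h) - v x ≤ ε * (x + h - x) := h2
          _ = ε * h := by ring_nf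
      have hgain : k * ℓ ≤ v (j₁ + ℓ) - v j₁ := by
        have h2 := vdiff_ge hIconn hv hj₁ ha'I (by linarith)
          (fun t ht => by
            have htm : t ∈ Icc j₁ j₂ := ⟨ht.1, le_trans ht.2 ha'lt.le⟩
            exact hkdef ▸ isMinOn_iff.mp ht₀min t htm)
        calc k * ℓ = k * (j₁ + ℓ - j₁) := by ring_nf
          _ ≤ _ := h2
      have hm₀h : m₀ * h ≤ ℓ := by
        rw [hℓdef]
        apply le_min
        · nlinarith [mul_le_mul_of_nonneg_left hh1 hm₀.le, hm₀a]
        · calc m₀ * h ≤ (δ/(2*(1+δ))) * h := mul_le_mul_of_nonneg_right hm₀b hh0.le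
            _ = δ*h/(2*(1+δ)) := by ring
      calc PB * (v (x+h) - v x) ≤ PB * (ε * h) :=
            mul_le_mul_of_nonneg_left hdrop hPB0.le
        _ = q * k * (m₀ * h) := by rw [hεdef]; field_simp
        _ ≤ q * k * ℓ := by
            apply mul_le_mul_of_nonneg_left hm₀h (by positivity)
        _ = q * (k * ℓ) := by ring
        _ ≤ q * (v (j₁ + ℓ) - v j₁) := mul_le_mul_of_nonneg_left hgain hq0.le
    · have h1δ : (0:ℝ) < 1 + δ := by linarith
      have hc1 : (1+δ)*ℓ ≤ δ*h/2 := by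
        calc (1+δ)*ℓ ≤ (1+δ)*(δ*h/(2*(1+δ))) := mul_le_mul_of_nonneg_left hℓb h1δ.le
          _ = δ*h/2 := by field_simp
      nlinarith
  · -- Case 2: derivative gets large to the left
    obtain ⟨t₁, ht₁, ht₁max⟩ :=
      isCompact_Icc.exists_isMaxOn (nonempty_Icc.mpr hj12.le) hvcont
    obtain ⟨K, hKdef⟩ : ∃ K : ℝ, K = deriv v t₁ := ⟨_, rfl⟩
    have hK0 : 0 < K := hKdef ▸ hv.2.2 t₁ (hIcc ht₁)
    obtain ⟨M, hMdef⟩ : ∃ M : ℝ, M = 2*K*PB*(1+δ)/(δ*q) := ⟨_, rfl⟩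
    have hM0 : 0 < M := by rw [hMdef]; positivity
    have hj₀ : j₁ - r/2 ∈ I := by
      apply hball; rw [Metric.mem_ball, Real.dist_eq]
      rw [show j₁ - r/2 - j₁ = -(r/2) by ring, abs_of_nonpos (by linarith)]; linarith
    obtain ⟨x, hxI, hxle, hxgt⟩ := hIn2 M (j₁ - r/2) hj₀
    have hxj₁ : x < j₁ := by linarith
    have hs : I ∩ (deriv v)⁻¹' (Ioi M) ∈ nhds x :=
      Filter.inter_mem (hIopen.mem_nhds hxI)
        (((hv.2.1 x hxI).continuousAt).preimage_mem_nhds (Ioi_mem_nhds hxgt))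
    obtain ⟨η, hη0, hηsub⟩ := Metric.mem_nhds_iff.mp hs
    obtain ⟨ℓ, hℓdef⟩ : ∃ ℓ : ℝ,
        ℓ = min (min (η/2) ((j₁ - x)/2)) (δ*(j₂-j₁)/(2*(1+δ))) := ⟨_, rfl⟩
    have hℓ0 : 0 < ℓ := by
      rw [hℓdef]
      exact lt_min (lt_min (by linarith) (by linarith)) (div_pos (mul_pos hδ (by linarith)) (by positivity))
    have hℓη : ℓ ≤ η/2 := hℓdef ▸ le_trans (min_le_left _ _) (min_le_left _ _)
    have hℓj : ℓ ≤ (j₁ - x)/2 := hℓdef ▸ le_trans (min_le_left _ _) (min_le_right _ _)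
    have hℓc : ℓ ≤ δ*(j₂-j₁)/(2*(1+δ)) := hℓdef ▸ min_le_right _ _
    have hsub : Icc x (x + ℓ) ⊆ I ∩ (deriv v)⁻¹' (Ioi M) := by
      intro t ht
      apply hηsub
      rw [Metric.mem_ball, Real.dist_eq, abs_of_nonneg (by linarith [ht.1])]
      have : t - x ≤ ℓ := by linarith [ht.2]
      linarith
    have ha'I : x + ℓ ∈ I := (hsub ⟨by linarith, le_rfl⟩).1
    have ha'j₁ : x + ℓ < j₁ := by linarith
    obtain ⟨w, hwdef⟩ : ∃ w : ℝ, w = 2*(1+δ)*ℓ/δ := ⟨_, rfl⟩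
    have hw0 : 0 < w := by rw [hwdef]; positivity
    have hwle : w ≤ j₂ - j₁ := by
      rw [hwdef, div_le_iff₀ (by positivity)]
      have h1δ : (0:ℝ) < 1 + δ := by linarith
      calc 2*(1+δ)*ℓ ≤ 2*(1+δ)*(δ*(j₂-j₁)/(2*(1+δ))) :=
            mul_le_mul_of_nonneg_left hℓc (by positivity)
        _ = (j₂-j₁)*δ := by field_simp
    have hbI : j₁ + w ∈ I := hIcc ⟨by linarith, by linarith⟩
    refine ⟨x, x + ℓ, j₁, j₁ + w, hxI, hbI, by linarith, ha'j₁, by linarith, ?_, ?_⟩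
    · have hdrop : v (j₁ + w) - v j₁ ≤ K * w := by
        have h2 := vdiff_le hIconn hv hj₁ hbI (by linarith)
          (fun t ht => by
            have htm : t ∈ Icc j₁ j₂ := ⟨ht.1, by linarith [ht.2]⟩
            exact hKdef ▸ isMaxOn_iff.mp ht₁max t htm)
        calc v (j₁+w) - v j₁ ≤ K * (j₁ + w - j₁) := h2
          _ = K * w := by ring_nf
      have hgain : M * ℓ ≤ v (x + ℓ) - v x := by
        have h2 := vdiff_ge hIconn hv hxI ha'I (by linarith)
          (fun t ht => ((hsub ht).2 : M < deriv v t).le)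
        calc M * ℓ = M * (x + ℓ - x) := by ring_nf
          _ ≤ _ := h2
      calc PB * (v (j₁+w) - v j₁) ≤ PB * (K * w) :=
            mul_le_mul_of_nonneg_left hdrop hPB0.le
        _ = q * (M * ℓ) := by rw [hwdef, hMdef]; field_simp
        _ ≤ q * (v (x+ℓ) - v x) := mul_le_mul_of_nonneg_left hgain hq0.le
    · have hδw : δ * (j₁ + w - j₁) = 2*(1+δ)*ℓ := by
        rw [show j₁ + w - j₁ = w by ring, hwdef]; field_simp
      rw [hδw]
      nlinarith

end AuxCalc

/-- two-point function: `p` on `B`, `r` off `B`. -/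
def tp (B : Set Ω) (p r : ℝ) : Ω → ℝ := fun ω => B.indicator (fun _ => p - r) ω + r

lemma tp_mem {B : Set Ω} {ω : Ω} (h : ω ∈ B) (p r : ℝ) : tp B p r ω = p := by
  simp [tp, Set.indicator_of_mem h]

lemma tp_not_mem {B : Set Ω} {ω : Ω} (h : ω ∉ B) (p r : ℝ) : tp B p r ω = r := by
  simp [tp, Set.indicator_of_notMem h]

section AuxMeas
variable (P : Measure Ω) [IsProbabilityMeasure P]

lemma tp_integrable {B : Set Ω} (hB : MeasurableSet B) (p r : ℝ) :
    Integrable (tp B p r) P :=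
  ((integrable_const (p - r)).indicator hB).add (integrable_const r)

lemma tp_integral {B : Set Ω} (hB : MeasurableSet B) (p r : ℝ) :
    ∫ ω, tp B p r ω ∂P = (P B).toReal * p + (1 - (P B).toReal) * r := by
  unfold tp
  rw [integral_add ((integrable_const (p - r)).indicator hB) (integrable_const r),
    integral_indicator_const _ hB, integral_const]
  simp [measure_univ]; simp only [Measure.real]; ring

lemma tp_memX {B : Set Ω} (hB : MeasurableSet B) (p r : ℝ) :
    MemX P (tp B p r) := by
  refine ⟨(measurable_const.indicator hB).add measurable_const, ⟨|p| + |r|, ?_⟩⟩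
  filter_upwards with ω
  by_cases h : ω ∈ B
  · rw [tp_mem h]; cases abs_cases p <;> cases abs_cases r <;> linarith
  · rw [tp_not_mem h]; cases abs_cases p <;> cases abs_cases r <;> linarith

lemma memX_const (c : ℝ) : MemX P (fun _ => c) :=
  ⟨measurable_const, ⟨|c|, by filter_upwards with ω; simp⟩⟩

lemma ae_nonempty {p : Ω → Prop} (h : ∀ᵐ ω ∂P, p ω) : ∃ ω, p ω := by
  have : P ≠ 0 := IsProbabilityMeasure.ne_zero P
  have : (ae P).NeBot := ae_neBot.mpr this
  exact h.exists

lemma bddBelow_rhoW_set {X : Ω → ℝ} (hX : MemX P X) :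
    BddBelow {m : ℝ | ∀ᵐ ω ∂P, -X ω ≤ m} := by
  obtain ⟨hm, C, hC⟩ := hX
  refine ⟨-C, fun m hm' => ?_⟩
  simp only [Set.mem_setOf_eq] at hm'
  obtain ⟨ω, h1, h2⟩ := ae_nonempty P (hm'.and hC)
  cases abs_cases (X ω) <;> linarith

lemma nonempty_rhoW_set {X : Ω → ℝ} (hX : MemX P X) :
    {m : ℝ | ∀ᵐ ω ∂P, -X ω ≤ m}.Nonempty := by
  obtain ⟨hm, C, hC⟩ := hX
  exact ⟨C, by filter_upwards [hC] with ω h; cases abs_cases (X ω) <;> linarith⟩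

/-- the worst-case level is a.s. a bound -/
lemma rhoW_ae {X : Ω → ℝ} (hX : MemX P X) : ∀ᵐ ω ∂P, -X ω ≤ rhoW P X := by
  have hbdd := bddBelow_rhoW_set P hX
  have hne := nonempty_rhoW_set P hX
  have key : ∀ n : ℕ, ∀ᵐ ω ∂P, -X ω ≤ rhoW P X + 1/(n+1) := by
    intro n
    have hlt : sInf {m : ℝ | ∀ᵐ ω ∂P, -X ω ≤ m} < rhoW P X + 1/(n+1) := by
      rw [rhoW]
      have : (0:ℝ) < 1/(n+1) := by positivity
      linarith [le_refl (sInf {m : ℝ | ∀ᵐ ω ∂P, -X ω ≤ m})]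
    obtain ⟨m, hmS, hmlt⟩ := (csInf_lt_iff hbdd hne).mp hlt
    simp only [Set.mem_setOf_eq] at hmS
    filter_upwards [hmS] with ω h; linarith
  filter_upwards [MeasureTheory.ae_all_iff.mpr key] with ω h
  by_contra hc
  push_neg at hc
  obtain ⟨n, hn⟩ := exists_nat_one_div_lt (show (0:ℝ) < -X ω - rhoW P X by linarith)
  linarith [h n]

/-- if m < rhoW X then with positive probability X < -m -/
lemma rhoW_pos_prob {X : Ω → ℝ} (hX : MemX P X) {m : ℝ} (hm : m < rhoW P X) :
    0 < P {ω | X ω < -m} := by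
  by_contra h
  push_neg at h
  have h0 : P {ω | X ω < -m} = 0 := le_antisymm h (by simp)
  have hae : ∀ᵐ ω ∂P, -X ω ≤ m := by
    rw [MeasureTheory.ae_iff]
    convert h0 using 2
    ext ω; simp only [Set.mem_setOf_eq, not_le]; constructor <;> intro <;> linarith
  have : rhoW P X ≤ m := csInf_le (bddBelow_rhoW_set P hX) hae
  linarith


end AuxMeas

section AuxConstruct
variable {I : Set ℝ} {v : ℝ → ℝ}

set_option maxHeartbeats 1000000 in
lemma exists_utility (hIopen : IsOpen I) (hIconn : I.OrdConnected)
    (hv : IsUtility I v) {c c₁ c₂ : ℝ} (hc : c ∈ I) (hc₂ : c₂ ∈ I)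
    (hcc₁ : c < c₁) (hc₁c₂ : c₁ < c₂) (n : ℕ) (hn : 1 ≤ n) :
    ∃ u : ℝ → ℝ, Measurable u ∧ IsUtility I u ∧ (∀ x ∈ I, RA v x ≤ RA u x) ∧
      MonotoneOn u I ∧ u c = 0 ∧
      (∀ y ∈ I, |u y| ≤ |v y - v c|) ∧
      (Real.exp (-1) * (v c₁ - v c) ≤ u c₁) ∧
      (∀ y ∈ I, c₂ ≤ y → u y ≤ u c₂ + Real.exp (-(n:ℝ)/2) * (v y - v c₂)) := by
  have hc₁ : c₁ ∈ I := hIconn.out hc hc₂ ⟨hcc₁.le, hc₁c₂.le⟩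
  have hn' : (1:ℝ) ≤ (n:ℝ) := by exact_mod_cast hn
  have hn0 : (0:ℝ) < (n:ℝ) := by linarith
  obtain ⟨m, hmdef⟩ : ∃ m : ℝ, m = (c₁ + c₂)/2 := ⟨_, rfl⟩
  obtain ⟨kk, hkkdef⟩ : ∃ kk : ℝ, kk = (n:ℝ) * (2/(c₂ - c₁)) := ⟨_, rfl⟩
  have hkk0 : 0 < kk := by
    rw [hkkdef]; apply mul_pos hn0
    have h21 : (0:ℝ) < c₂ - c₁ := by linarith
    positivity
  -- the logistic weight
  obtain ⟨G, hGdef⟩ : ∃ G : ℝ → ℝ, G = fun x => (1 + Real.exp (-kk*(x-m)))⁻¹ :=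
    ⟨_, rfl⟩
  have hden : ∀ x : ℝ, 0 < 1 + Real.exp (-kk*(x-m)) := fun x => by positivity
  have hG_pos : ∀ x, 0 < G x := by
    intro x; rw [hGdef]; exact inv_pos.mpr (hden x)
  have hG_le1 : ∀ x, G x ≤ 1 := by
    intro x; rw [hGdef]
    rw [inv_le_one_iff₀]
    right
    linarith [Real.exp_pos (-kk*(x-m))]
  have hGmono : Monotone G := by
    intro x y hxy
    rw [hGdef]
    simp only
    apply inv_anti₀ (hden y)
    have : -kk*(y-m) ≤ -kk*(x-m) := by nlinarith
    linarith [Real.exp_le_exp.mpr this]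
  -- derivative of G
  have hGder : ∀ x : ℝ, HasDerivAt G
      (-(Real.exp (-kk*(x-m)) * -kk) / (1 + Real.exp (-kk*(x-m)))^2) x := by
    intro x
    rw [hGdef]
    have h1 : HasDerivAt (fun y : ℝ => -kk*(y-m)) (-kk) x := by
      simpa using ((hasDerivAt_id x).sub_const m).const_mul (-kk)
    have h2 := h1.exp
    have h3 := h2.const_add 1
    exact h3.inv (ne_of_gt (hden x))
  have hG'nonneg : ∀ x : ℝ,
      0 ≤ -(Real.exp (-kk*(x-m)) * -kk) / (1 + Real.exp (-kk*(x-m)))^2 := by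
    intro x
    apply div_nonneg _ (sq_nonneg _)
    have := Real.exp_pos (-kk*(x-m))
    nlinarith
  have hGcont : Continuous G := by
    have : Differentiable ℝ G := fun x => (hGder x).differentiableAt
    exact this.continuous
  -- special values
  have hkkm : kk * (m - c₁) = (n:ℝ) := by
    rw [hkkdef, hmdef]
    have h : c₂ - c₁ ≠ 0 := by linarith
    field_simp
    ring
  have hGc₁ : (n:ℝ) * G c₁ ≤ 1 := by
    rw [hGdef]
    simp only
    have he : -kk*(c₁-m) = (n:ℝ) := by rw [← hkkm]; ring
    rw [he]
    have hle : (n:ℝ) ≤ 1 + Real.exp (n:ℝ) := by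
      linarith [Real.add_one_le_exp (n:ℝ)]
    calc (n:ℝ) * (1 + Real.exp (n:ℝ))⁻¹
        ≤ (1 + Real.exp (n:ℝ)) * (1 + Real.exp (n:ℝ))⁻¹ :=
          mul_le_mul_of_nonneg_right hle (by positivity)
      _ = 1 := mul_inv_cancel₀ (by positivity)
  have hGc₂ : (1:ℝ)/2 ≤ G c₂ := by
    rw [hGdef]
    simp only
    have he : -kk*(c₂-m) = -(n:ℝ) := by
      have : c₂ - m = m - c₁ := by rw [hmdef]; ring
      rw [this, ← hkkm]; ring
    rw [he]
    have h1 : Real.exp (-(n:ℝ)) ≤ 1 := by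
      rw [show (1:ℝ) = Real.exp 0 from (Real.exp_zero).symm]
      exact Real.exp_le_exp.mpr (by linarith)
    have h2 : (0:ℝ) < 1 + Real.exp (-(n:ℝ)) := by positivity
    have h3 : 1 + Real.exp (-(n:ℝ)) ≤ 2 := by linarith
    calc (1:ℝ)/2 = (2:ℝ)⁻¹ := one_div 2
      _ ≤ (1 + Real.exp (-(n:ℝ)))⁻¹ := inv_anti₀ h2 h3
  -- the exponential damping factor
  obtain ⟨E, hEdef⟩ : ∃ E : ℝ → ℝ, E = fun x => Real.exp (-(n:ℝ) * G x) := ⟨_, rfl⟩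
  have hE_pos : ∀ x, 0 < E x := fun x => by rw [hEdef]; exact Real.exp_pos _
  have hE_le1 : ∀ x, E x ≤ 1 := by
    intro x
    rw [hEdef, show (1:ℝ) = Real.exp 0 from (Real.exp_zero).symm]
    apply Real.exp_le_exp.mpr
    have := hG_pos x
    nlinarith
  have hE_anti : ∀ x y : ℝ, x ≤ y → E y ≤ E x := by
    intro x y hxy
    rw [hEdef]
    apply Real.exp_le_exp.mpr
    have := hGmono hxy
    nlinarith
  have hE_low : ∀ t : ℝ, t ≤ c₁ → Real.exp (-1) ≤ E t := by
    intro t ht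
    rw [hEdef]
    apply Real.exp_le_exp.mpr
    have h1 : G t ≤ G c₁ := hGmono ht
    have h2 : (n:ℝ) * G t ≤ (n:ℝ) * G c₁ := by nlinarith
    linarith [hGc₁]
  have hE_high : ∀ t : ℝ, c₂ ≤ t → E t ≤ Real.exp (-(n:ℝ)/2) := by
    intro t ht
    rw [hEdef]
    apply Real.exp_le_exp.mpr
    have h1 : G c₂ ≤ G t := hGmono ht
    nlinarith [hGc₂]
  have hEder : ∀ x : ℝ, HasDerivAt E
      (Real.exp (-(n:ℝ) * G x) * (-(n:ℝ) *
        (-(Real.exp (-kk*(x-m)) * -kk) / (1 + Real.exp (-kk*(x-m)))^2))) x := by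
    intro x
    rw [hEdef]
    exact ((hGder x).const_mul (-(n:ℝ))).exp
  have hEdiff : Differentiable ℝ E := fun x => (hEder x).differentiableAt
  have hEcont : Continuous E := hEdiff.continuous
  -- the integrand
  obtain ⟨f, hfdef⟩ : ∃ f : ℝ → ℝ,
      f = I.indicator (fun t => deriv v t * E t) := ⟨_, rfl⟩
  have hf_eqI : ∀ t ∈ I, f t = deriv v t * E t := by
    intro t ht; rw [hfdef]; exact Set.indicator_of_mem ht _
  have hf_meas : Measurable f := by
    rw [hfdef]
    exact ((measurable_deriv v).mul hEcont.measurable).indicator hIopen.measurableSet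
  have hf_nonneg : ∀ t, 0 ≤ f t := by
    intro t
    rw [hfdef]
    by_cases ht : t ∈ I
    · rw [Set.indicator_of_mem ht]
      exact mul_nonneg (hv.2.2 t ht).le (hE_pos t).le
    · rw [Set.indicator_of_notMem ht]
  have hf_cont : ∀ x ∈ I, ContinuousAt f x := by
    intro x hx
    have hev : f =ᶠ[nhds x] fun t => deriv v t * E t := by
      filter_upwards [hIopen.eventually_mem hx] with t ht
      exact hf_eqI t ht
    exact ContinuousAt.congr (((hv.2.1 x hx).continuousAt).mul hEcont.continuousAt) hev.symm
  have hf_le : ∀ t ∈ I, f t ≤ deriv v t := by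
    intro t ht
    rw [hf_eqI t ht]
    nlinarith [hE_le1 t, hE_pos t, hv.2.2 t ht]
  have hf_int : ∀ s t : ℝ, s ∈ I → t ∈ I → IntervalIntegrable f volume s t := by
    intro s t hs ht
    apply ContinuousOn.intervalIntegrable
    intro x hx
    exact (hf_cont x (hIconn.uIcc_subset hs ht hx)).continuousWithinAt
  -- the utility function
  obtain ⟨u, hudef⟩ : ∃ u : ℝ → ℝ, u = fun x =>
      (∫⁻ t in Ioc c x, ENNReal.ofReal (f t)).toReal
      - (∫⁻ t in Ioc x c, ENNReal.ofReal (f t)).toReal := ⟨_, rfl⟩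
  -- representation on I as an interval integral
  have hlint : ∀ s t : ℝ, s ∈ I → t ∈ I → s ≤ t →
      (∫⁻ r in Ioc s t, ENNReal.ofReal (f r)).toReal = ∫ r in Ioc s t, f r := by
    intro s t hs ht hst
    have hint : IntegrableOn f (Ioc s t) volume := (hf_int s t hs ht).1
    rw [MeasureTheory.integral_eq_lintegral_of_nonneg_ae
      (Filter.Eventually.of_forall (fun r => hf_nonneg r)) hint.aestronglyMeasurable]
  have hu_eq : ∀ y ∈ I, u y = ∫ t in c..y, f t := by
    intro y hy
    rcases le_total c y with hcy | hyc
    · rw [hudef]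
      simp only
      rw [Set.Ioc_eq_empty_of_le hcy, Measure.restrict_empty,
        MeasureTheory.lintegral_zero_measure]
      rw [intervalIntegral.integral_of_le hcy, hlint c y hc hy hcy]
      simp
    · rw [hudef]
      simp only
      rw [Set.Ioc_eq_empty_of_le hyc, Measure.restrict_empty,
        MeasureTheory.lintegral_zero_measure]
      rw [intervalIntegral.integral_of_ge hyc, hlint y c hy hc hyc]
      simp
  have hu_c : u c = 0 := by
    rw [hu_eq c hc, intervalIntegral.integral_same]
  -- measurability of u
  have hu_meas : Measurable u := by
    rw [hudef]
    apply Measurable.sub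
    · apply ENNReal.measurable_toReal.comp
      apply Monotone.measurable
      intro x y hxy
      exact lintegral_mono' (Measure.restrict_mono (Set.Ioc_subset_Ioc_right hxy) le_rfl)
        le_rfl
    · apply ENNReal.measurable_toReal.comp
      apply Antitone.measurable
      intro x y hxy
      exact lintegral_mono' (Measure.restrict_mono (Set.Ioc_subset_Ioc_left hxy) le_rfl)
        le_rfl
  -- derivative of u on I
  have hu_deriv : ∀ x ∈ I, HasDerivAt u (f x) x := by
    intro x hx
    have hFT := intervalIntegral.integral_hasDerivAt_right (hf_int c x hc hx)
      ⟨Set.univ, Filter.univ_mem, (hf_meas.aestronglyMeasurable).restrict⟩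
      (hf_cont x hx)
    apply hFT.congr_of_eventuallyEq
    filter_upwards [hIopen.eventually_mem hx] with y hy
    exact hu_eq y hy
  have hu_deriv_eq : ∀ x ∈ I, deriv u x = f x := fun x hx => (hu_deriv x hx).deriv
  have hu_deriv_ev : ∀ x ∈ I, deriv u =ᶠ[nhds x] fun t => deriv v t * E t := by
    intro x hx
    filter_upwards [hIopen.eventually_mem hx] with y hy
    rw [hu_deriv_eq y hy, hf_eqI y hy]
  have hu_util : IsUtility I u := by
    refine ⟨fun x hx => (hu_deriv x hx).differentiableAt, ?_, ?_⟩
    · intro x hx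
      have hd : DifferentiableAt ℝ (fun t => deriv v t * E t) x :=
        (hv.2.1 x hx).mul (hEdiff x)
      exact (Filter.EventuallyEq.differentiableAt_iff (hu_deriv_ev x hx)).mpr hd
    · intro x hx
      rw [hu_deriv_eq x hx, hf_eqI x hx]
      exact mul_pos (hv.2.2 x hx) (hE_pos x)
  have hu_RA : ∀ x ∈ I, RA v x ≤ RA u x := by
    intro x hx
    have hdd : deriv (deriv u) x = deriv (fun t => deriv v t * E t) x :=
      (hu_deriv_ev x hx).deriv_eq
    have hmul : HasDerivAt (fun t => deriv v t * E t)
        (deriv (deriv v) x * E x + deriv v x *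
          (Real.exp (-(n:ℝ) * G x) * (-(n:ℝ) *
            (-(Real.exp (-kk*(x-m)) * -kk) / (1 + Real.exp (-kk*(x-m)))^2)))) x :=
      (hv.2.1 x hx).hasDerivAt.mul (hEder x)
    rw [RA, RA, hdd, hmul.deriv, hu_deriv_eq x hx, hf_eqI x hx]
    obtain ⟨g', hg'def⟩ : ∃ g' : ℝ,
        g' = -(Real.exp (-kk*(x-m)) * -kk) / (1 + Real.exp (-kk*(x-m)))^2 := ⟨_, rfl⟩
    have hg'0 : 0 ≤ g' := hg'def ▸ hG'nonneg x
    have hEx : Real.exp (-(n:ℝ) * G x) = E x := by rw [hEdef]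
    rw [← hg'def, hEx]
    have hvx : 0 < deriv v x := hv.2.2 x hx
    have hEpx : 0 < E x := hE_pos x
    have hkey : (deriv (deriv v) x * E x + deriv v x * (E x * (-(n:ℝ) * g')))
        / (deriv v x * E x)
        = (deriv (deriv v) x - (n:ℝ) * g' * deriv v x) / deriv v x := by
      rw [show deriv (deriv v) x * E x + deriv v x * (E x * (-(n:ℝ) * g'))
          = (deriv (deriv v) x - (n:ℝ) * g' * deriv v x) * E x from by ring]
      exact mul_div_mul_right _ _ (ne_of_gt hEpx)
    rw [neg_div, neg_div, hkey,
      show (deriv (deriv v) x - (n:ℝ) * g' * deriv v x) / deriv v x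
        = deriv (deriv v) x / deriv v x - (n:ℝ) * g' * (deriv v x / deriv v x) from by
          ring,
      div_self (ne_of_gt hvx)]
    have : 0 ≤ (n:ℝ) * g' := by positivity
    linarith
  -- interval integrability of deriv v
  have hv_int : ∀ s t : ℝ, s ∈ I → t ∈ I → IntervalIntegrable (deriv v) volume s t := by
    intro s t hs ht
    apply ContinuousOn.intervalIntegrable
    intro x hx
    exact ((hv.2.1 x (hIconn.uIcc_subset hs ht hx)).continuousAt).continuousWithinAt
  have hv_ftc : ∀ s t : ℝ, s ∈ I → t ∈ I → ∫ r in s..t, deriv v r = v t - v s := by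
    intro s t hs ht
    apply intervalIntegral.integral_deriv_eq_sub _ (hv_int s t hs ht)
    intro x hx
    exact hv.1 x (hIconn.uIcc_subset hs ht hx)
  -- monotonicity of u on I
  have hu_mono : MonotoneOn u I := by
    apply monotoneOn_of_deriv_nonneg hIconn.convex
    · intro x hx; exact ((hu_deriv x hx).differentiableAt).continuousAt.continuousWithinAt
    · intro x hx; rw [hIopen.interior_eq] at hx
      exact ((hu_deriv x hx).differentiableAt).differentiableWithinAt
    · intro x hx; rw [hIopen.interior_eq] at hx
      rw [hu_deriv_eq x hx]
      exact hf_nonneg x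
  -- domination
  have hdom : ∀ y ∈ I, |u y| ≤ |v y - v c| := by
    intro y hy
    rcases le_total c y with hcy | hyc
    · have h0 : 0 ≤ ∫ t in c..y, f t :=
        intervalIntegral.integral_nonneg hcy (fun t _ => hf_nonneg t)
      have hle : ∫ t in c..y, f t ≤ ∫ t in c..y, deriv v t := by
        apply intervalIntegral.integral_mono_on hcy (hf_int c y hc hy) (hv_int c y hc hy)
        intro t ht
        exact hf_le t (hIconn.out hc hy ht)
      rw [hu_eq y hy, abs_of_nonneg h0]
      calc ∫ t in c..y, f t ≤ ∫ t in c..y, deriv v t := hle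
        _ = v y - v c := hv_ftc c y hc hy
        _ ≤ |v y - v c| := le_abs_self _
    · have h0 : 0 ≤ ∫ t in y..c, f t :=
        intervalIntegral.integral_nonneg hyc (fun t _ => hf_nonneg t)
      have hle : ∫ t in y..c, f t ≤ ∫ t in y..c, deriv v t := by
        apply intervalIntegral.integral_mono_on hyc (hf_int y c hy hc) (hv_int y c hy hc)
        intro t ht
        exact hf_le t (hIconn.out hy hc ht)
      have hsymm : u y = -∫ t in y..c, f t := by
        rw [hu_eq y hy, intervalIntegral.integral_symm]
      rw [hsymm, abs_neg, abs_of_nonneg h0]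
      have hvy : v c - v y = ∫ t in y..c, deriv v t := (hv_ftc y c hy hc).symm
      have : v y - v c ≤ 0 := by linarith [hle]
      rw [abs_of_nonpos this]
      linarith [hle]
  -- lower bound at c₁
  have hlow : Real.exp (-1) * (v c₁ - v c) ≤ u c₁ := by
    rw [hu_eq c₁ hc₁]
    have hle : ∫ t in c..c₁, Real.exp (-1) * deriv v t ≤ ∫ t in c..c₁, f t := by
      apply intervalIntegral.integral_mono_on hcc₁.le
        ((hv_int c c₁ hc hc₁).const_mul _) (hf_int c c₁ hc hc₁)
      intro t ht
      have htI : t ∈ I := hIconn.out hc hc₁ ht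
      rw [hf_eqI t htI]
      have h1 := hE_low t ht.2
      have h2 := (hv.2.2 t htI).le
      nlinarith
    calc Real.exp (-1) * (v c₁ - v c)
        = ∫ t in c..c₁, Real.exp (-1) * deriv v t := by
          rw [intervalIntegral.integral_const_mul, hv_ftc c c₁ hc hc₁]
      _ ≤ ∫ t in c..c₁, f t := hle
  -- upper bound beyond c₂
  have hupper : ∀ y ∈ I, c₂ ≤ y → u y ≤ u c₂ + Real.exp (-(n:ℝ)/2) * (v y - v c₂) := by
    intro y hy hc₂y
    have hadd : (∫ t in c..c₂, f t) + ∫ t in c₂..y, f t = ∫ t in c..y, f t :=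
      intervalIntegral.integral_add_adjacent_intervals (hf_int c c₂ hc hc₂)
        (hf_int c₂ y hc₂ hy)
    have hle : ∫ t in c₂..y, f t ≤ ∫ t in c₂..y, Real.exp (-(n:ℝ)/2) * deriv v t := by
      apply intervalIntegral.integral_mono_on hc₂y (hf_int c₂ y hc₂ hy)
        ((hv_int c₂ y hc₂ hy).const_mul _)
      intro t ht
      have htI : t ∈ I := hIconn.out hc₂ hy ht
      rw [hf_eqI t htI]
      have h1 := hE_high t ht.1
      have h2 := (hv.2.2 t htI).le
      nlinarith
    rw [hu_eq y hy, hu_eq c₂ hc₂, ← hadd]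
    have : ∫ t in c₂..y, Real.exp (-(n:ℝ)/2) * deriv v t
        = Real.exp (-(n:ℝ)/2) * (v y - v c₂) := by
      rw [intervalIntegral.integral_const_mul, hv_ftc c₂ y hc₂ hy]
    linarith
  exact ⟨u, hu_meas, hu_util, hu_RA, hu_mono, hu_c, hdom, hlow, hupper⟩

end AuxConstruct

section AuxForward
variable (P : Measure Ω) [IsProbabilityMeasure P]
variable {I : Set ℝ} {v : ℝ → ℝ} {ρ : (Ω → ℝ) → ℝ}

lemma rho_zero (hρ : IsRiskMeasure P ρ)
    (hph : ∀ X : Ω → ℝ, MemX P X → ∀ t : ℝ, 0 < t →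
      ρ (fun ω => t * X ω) = t * ρ X) : ρ (fun _ => 0) = 0 := by
  have h := hph (fun _ => 0) (memX_const P 0) 2 two_pos
  simp only [mul_zero] at h
  linarith

lemma rho_const (hρ : IsRiskMeasure P ρ)
    (hph : ∀ X : Ω → ℝ, MemX P X → ∀ t : ℝ, 0 < t →
      ρ (fun ω => t * X ω) = t * ρ X) (c : ℝ) : ρ (fun _ => c) = -c := by
  have h := hρ.2 (fun _ => 0) (memX_const P 0) c
  simp only [zero_add] at h
  rw [h, rho_zero P hρ hph]; ring

lemma rho_le_rhoW (hρ : IsRiskMeasure P ρ)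
    (hph : ∀ X : Ω → ℝ, MemX P X → ∀ t : ℝ, 0 < t →
      ρ (fun ω => t * X ω) = t * ρ X) {X : Ω → ℝ} (hX : MemX P X) :
    ρ X ≤ rhoW P X := by
  have hae : ∀ᵐ ω ∂P, (fun _ => -rhoW P X) ω ≤ X ω := by
    filter_upwards [rhoW_ae P hX] with ω h; show -rhoW P X ≤ X ω; linarith
  have := hρ.1 (fun _ => -rhoW P X) X (memX_const P _) hX hae
  rwa [rho_const P hρ hph, neg_neg] at this

lemma memX_smul {X : Ω → ℝ} (hX : MemX P X) (t : ℝ) : MemX P (fun ω => t * X ω) := by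
  obtain ⟨hm, C, hC⟩ := hX
  refine ⟨hm.const_mul t, ⟨|t| * C, ?_⟩⟩
  filter_upwards [hC] with ω h
  rw [abs_mul]
  exact mul_le_mul_of_nonneg_left h (abs_nonneg t)

lemma rho_tp (hρ : IsRiskMeasure P ρ)
    (hph : ∀ X : Ω → ℝ, MemX P X → ∀ t : ℝ, 0 < t →
      ρ (fun ω => t * X ω) = t * ρ X)
    {B : Set Ω} (hB : MeasurableSet B) {a b : ℝ} (hab : a < b) :
    ρ (tp B b a) = (b - a) * ρ (tp B 1 0) - a := by
  have h1 : tp B b a = fun ω => (b - a) * tp B 1 0 ω + a := by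
    funext ω
    by_cases h : ω ∈ B
    · rw [tp_mem h, tp_mem h]; ring
    · rw [tp_not_mem h, tp_not_mem h]; ring
  rw [h1, hρ.2 _ (memX_smul P (tp_memX P hB 1 0) _) a,
    hph (tp B 1 0) (tp_memX P hB 1 0) (b - a) (by linarith)]

/-- Core lemma: consistency implies nonnegativity of `ρ` on sub-full indicators. -/
lemma rho_ind_nonneg
    (hIopen : IsOpen I) (hIconn : I.OrdConnected) (hIne : I.Nonempty)
    (hv : IsUtility I v)
    (hInada : (∀ ε : ℝ, 0 < ε → ∀ b ∈ I, ∃ x ∈ I, b ≤ x ∧ deriv v x < ε) ∨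
      (∀ M : ℝ, ∀ b ∈ I, ∃ x ∈ I, x ≤ b ∧ M < deriv v x))
    (hρ : IsRiskMeasure P ρ)
    (hph : ∀ X : Ω → ℝ, MemX P X → ∀ t : ℝ, 0 < t →
      ρ (fun ω => t * X ω) = t * ρ X)
    (hcons : VSDConsistent P I v {X | MemX P X} ρ)
    {B : Set Ω} (hB : MeasurableSet B) (hB1 : P B < 1) :
    0 ≤ ρ (tp B 1 0) := by
  by_cases hB0 : P B = 0
  · -- B is null: tp B 1 0 = 0 a.e., use monotonicity
    have hae : ∀ᵐ ω ∂P, tp B 1 0 ω ≤ (fun _ => (0:ℝ)) ω := by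
      have := MeasureTheory.measure_eq_zero_iff_ae_notMem.mp hB0
      filter_upwards [this] with ω h
      rw [tp_not_mem h]
    have := hρ.1 (tp B 1 0) (fun _ => 0) (tp_memX P hB 1 0) (memX_const P 0) hae
    rw [rho_zero P hρ hph] at this
    linarith
  · by_contra hneg
    push_neg at hneg
    set δ := -ρ (tp B 1 0) with hδdef
    have hδ : 0 < δ := by simp only [hδdef]; linarith
    set PB := (P B).toReal with hPBdef
    have hPB0 : 0 < PB := ENNReal.toReal_pos hB0 (measure_ne_top P B)
    have hPB1 : PB < 1 := by
      rw [hPBdef]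
      have h := ENNReal.toReal_strict_mono ENNReal.one_ne_top hB1
      simpa using h
    set q := 1 - PB with hqdef
    have hq0 : 0 < q := by simp only [hqdef]; linarith
    -- geometry: find a ≤ a' ≤ b' ≤ b in I with the two key inequalities
    obtain ⟨a, a', b', b, haI, hbI, h1, h2, h3, hkey, hcontra⟩ :
        ∃ a a' b' b : ℝ, a ∈ I ∧ b ∈ I ∧ a < a' ∧ a' < b' ∧ b' < b ∧
          PB * (v b - v b') ≤ q * (v a' - v a) ∧
          (1 + δ) * (a' - a) < δ * (b - b') :=
      geometry hIopen hIconn hIne hv hInada hPB0 hq0 hδ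
    -- the comparison pair
    set X := tp B b a with hX
    set Y := tp B b' a' with hY
    have ha'I : a' ∈ I := hIconn.out haI hbI ⟨h1.le, (h2.trans h3).le⟩
    have hb'I : b' ∈ I := hIconn.out haI hbI ⟨(h1.trans h2).le, h3.le⟩
    have hvsd : vSD P I v X Y := by
      intro u hu hRA hIX hIY
      have e1 : (fun ω => u (X ω)) = tp B (u b) (u a) := by
        funext ω; by_cases h : ω ∈ B
        · rw [hX, tp_mem h, tp_mem h]
        · rw [hX, tp_not_mem h, tp_not_mem h]
      have e2 : (fun ω => u (Y ω)) = tp B (u b') (u a') := by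
        funext ω; by_cases h : ω ∈ B
        · rw [hY, tp_mem h, tp_mem h]
        · rw [hY, tp_not_mem h, tp_not_mem h]
      calc ∫ ω, u (X ω) ∂P = PB * u b + (1 - PB) * u a := by
            rw [e1, tp_integral P hB]
        _ ≤ PB * u b' + (1 - PB) * u a' := by
            have := pair_ineq hIconn hIopen hv hu hRA haI hbI h1.le h2.le h3.le
              hPB0.le hq0.le hkey
            simpa [hqdef] using this
        _ = ∫ ω, u (Y ω) ∂P := by rw [e2, tp_integral P hB]
    have hmemL1 : ∀ (p r : ℝ), p ∈ I → r ∈ I → MemL1 P I v (tp B p r) := by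
      intro p r hp hr
      refine ⟨(tp_memX P hB p r).1, ?_, ?_⟩
      · filter_upwards with ω
        by_cases h : ω ∈ B
        · rw [tp_mem h]; exact hp
        · rw [tp_not_mem h]; exact hr
      · have : (fun ω => v (tp B p r ω)) = tp B (v p) (v r) := by
          funext ω; by_cases h : ω ∈ B
          · rw [tp_mem h, tp_mem h]
          · rw [tp_not_mem h, tp_not_mem h]
        rw [this]; exact tp_integrable P hB _ _
    have hle := hcons X Y (tp_memX P hB b a) (tp_memX P hB b' a')
      (hmemL1 b a hbI haI) (hmemL1 b' a' hb'I ha'I) hvsd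
    rw [hX, hY, rho_tp P hρ hph hB (h1.trans (h2.trans h3)),
      rho_tp P hρ hph hB h2] at hle
    -- hle : (b' - a') * ρ(ind) - a' ≤ (b - a) * ρ(ind) - a
    have hrepl : ρ (tp B 1 0) = -δ := by simp [hδdef]
    rw [hrepl] at hle
    nlinarith [hle, hcontra]


lemma rho_ge_rhoW
    (hIopen : IsOpen I) (hIconn : I.OrdConnected) (hIne : I.Nonempty)
    (hv : IsUtility I v)
    (hInada : (∀ ε : ℝ, 0 < ε → ∀ b ∈ I, ∃ x ∈ I, b ≤ x ∧ deriv v x < ε) ∨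
      (∀ M : ℝ, ∀ b ∈ I, ∃ x ∈ I, x ≤ b ∧ M < deriv v x))
    (hρ : IsRiskMeasure P ρ)
    (hph : ∀ X : Ω → ℝ, MemX P X → ∀ t : ℝ, 0 < t →
      ρ (fun ω => t * X ω) = t * ρ X)
    (hcons : VSDConsistent P I v {X | MemX P X} ρ)
    {X : Ω → ℝ} (hX : MemX P X) : rhoW P X ≤ ρ X := by
  have key : ∀ m : ℝ, m < rhoW P X → m ≤ ρ X := by
    intro m hm
    have hAmeas : MeasurableSet {ω | X ω < -m} :=
      measurableSet_lt hX.1 measurable_const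
    have hA : 0 < P {ω | X ω < -m} := rhoW_pos_prob P hX hm
    have hBmeas : MeasurableSet {ω | X ω < -m}ᶜ := hAmeas.compl
    have hB1 : P {ω | X ω < -m}ᶜ < 1 := by
      rw [measure_compl hAmeas (measure_ne_top _ _), measure_univ]
      exact ENNReal.sub_lt_self ENNReal.one_ne_top one_ne_zero (ne_of_gt hA)
    obtain ⟨C, hC⟩ := hX.2
    have hXZ : ∀ᵐ ω ∂P, X ω ≤ tp {ω | X ω < -m}ᶜ (max C (-m)) (-m) ω := by
      filter_upwards [hC] with ω hω
      by_cases h : ω ∈ {ω | X ω < -m}ᶜ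
      · rw [tp_mem h]
        exact le_trans (le_of_abs_le hω) (le_max_left _ _)
      · rw [tp_not_mem h]
        simp only [Set.mem_compl_iff, Set.mem_setOf_eq, not_not] at h
        exact h.le
    have hρZX : ρ (tp {ω | X ω < -m}ᶜ (max C (-m)) (-m)) ≤ ρ X :=
      hρ.1 X _ hX (tp_memX P hBmeas _ _) hXZ
    have hZ : m ≤ ρ (tp {ω | X ω < -m}ᶜ (max C (-m)) (-m)) := by
      rcases eq_or_lt_of_le (le_max_right C (-m)) with heq | hlt
      · have hconst : tp {ω | X ω < -m}ᶜ (max C (-m)) (-m) = fun _ => -m := by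
          funext ω
          by_cases h : ω ∈ {ω | X ω < -m}ᶜ
          · rw [tp_mem h, ← heq]
          · rw [tp_not_mem h]
        rw [hconst, rho_const P hρ hph, neg_neg]
      · rw [rho_tp P hρ hph hBmeas hlt]
        have h0 := rho_ind_nonneg P hIopen hIconn hIne hv hInada hρ hph hcons
          hBmeas hB1
        nlinarith [h0, hlt]
    linarith
  by_contra h
  push_neg at h
  have := key ((ρ X + rhoW P X)/2) (by linarith)
  linarith
end AuxForward

section AuxRev
variable (P : Measure Ω) [IsProbabilityMeasure P]
variable {I : Set ℝ} {v : ℝ → ℝ}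

lemma rhoW_consistent (hIopen : IsOpen I) (hIconn : I.OrdConnected)
    (hv : IsUtility I v) {X Y : Ω → ℝ}
    (hX : MemX P X) (hY : MemX P Y) (hL1X : MemL1 P I v X) (hL1Y : MemL1 P I v Y)
    (hvsd : vSD P I v X Y) : rhoW P Y ≤ rhoW P X := by
  by_contra hlt
  push_neg at hlt
  obtain ⟨a, hadef⟩ : ∃ a : ℝ, a = -rhoW P Y := ⟨_, rfl⟩
  obtain ⟨b, hbdef⟩ : ∃ b : ℝ, b = -rhoW P X := ⟨_, rfl⟩
  have hab : a < b := by rw [hadef, hbdef]; linarith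
  obtain ⟨c, hcdef⟩ : ∃ c : ℝ, c = (a + b)/2 := ⟨_, rfl⟩
  have hac : a < c := by rw [hcdef]; linarith
  have hcb : c < b := by rw [hcdef]; linarith
  -- positive probability that Y < c
  have hp : 0 < P {ω | Y ω < c} := by
    have h1 : -c < rhoW P Y := by rw [hadef] at hac; linarith
    have := rhoW_pos_prob P hY h1
    simpa using this
  obtain ⟨p, hpdef⟩ : ∃ p : ℝ, p = (P {ω | Y ω < c}).toReal := ⟨_, rfl⟩
  have hp0 : 0 < p := by
    rw [hpdef]; exact ENNReal.toReal_pos (ne_of_gt hp) (measure_ne_top _ _)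
  -- find witness points in I
  have hXae : ∀ᵐ ω ∂P, X ω ∈ I ∧ b ≤ X ω := by
    filter_upwards [hL1X.2.1, rhoW_ae P hX] with ω h1 h2
    exact ⟨h1, by rw [hbdef]; linarith⟩
  obtain ⟨ω₀, hz₀I, hz₀b⟩ := ae_nonempty P hXae
  have hSne : {ω | Y ω ∈ I ∧ Y ω < c}.Nonempty := by
    by_contra hemp
    rw [Set.not_nonempty_iff_eq_empty] at hemp
    have hsub : {ω | Y ω < c} ⊆ {ω | ¬ (Y ω ∈ I)} := by
      intro ω hω
      by_contra hI
      simp only [Set.mem_setOf_eq, not_not] at hI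
      exact Set.eq_empty_iff_forall_notMem.mp hemp ω ⟨hI, hω⟩
    have h0 : P {ω | ¬ (Y ω ∈ I)} = 0 := by
      rw [← MeasureTheory.ae_iff] at *
      exact hL1Y.2.1
    exact absurd (le_antisymm ((measure_mono hsub).trans h0.le) (by simp)) (ne_of_gt hp)
  obtain ⟨ω₁, hy₀I, hy₀c⟩ := hSne
  have hcI : c ∈ I := hIconn.out hy₀I hz₀I ⟨hy₀c.le, by linarith⟩
  have hbI : b ∈ I := hIconn.out hy₀I hz₀I ⟨by linarith, hz₀b⟩
  obtain ⟨c₁, hc₁def⟩ : ∃ c₁ : ℝ, c₁ = c + (b - c)/3 := ⟨_, rfl⟩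
  obtain ⟨c₂, hc₂def⟩ : ∃ c₂ : ℝ, c₂ = c + 2*(b - c)/3 := ⟨_, rfl⟩
  have hcc₁ : c < c₁ := by rw [hc₁def]; linarith
  have hc₁c₂ : c₁ < c₂ := by rw [hc₁def, hc₂def]; linarith
  have hc₂b : c₂ < b := by rw [hc₂def]; linarith
  have hc₂I : c₂ ∈ I := hIconn.out hcI hbI ⟨by linarith, hc₂b.le⟩
  have hc₁I : c₁ ∈ I := hIconn.out hcI hbI ⟨hcc₁.le, by linarith⟩
  -- strict monotonicity of v
  have hvmono : StrictMonoOn v I := by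
    apply strictMonoOn_of_deriv_pos hIconn.convex
    · intro x hx; exact (hv.1 x hx).continuousAt.continuousWithinAt
    · intro x hx; rw [hIopen.interior_eq] at hx; exact hv.2.2 x hx
  have hvc₁ : 0 < v c₁ - v c := by
    have := hvmono hcI hc₁I hcc₁
    linarith
  obtain ⟨L, hLdef⟩ : ∃ L : ℝ, L = Real.exp (-1) * p * (v c₁ - v c) := ⟨_, rfl⟩
  have hL0 : 0 < L := by
    rw [hLdef]
    exact mul_pos (mul_pos (Real.exp_pos _) hp0) hvc₁
  obtain ⟨CY, hCYdef⟩ : ∃ CY : ℝ,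
      CY = (∫ ω, |v (Y ω)| ∂P) + |v c₂| := ⟨_, rfl⟩
  have hCY0 : 0 ≤ CY := by
    rw [hCYdef]
    have : 0 ≤ ∫ ω, |v (Y ω)| ∂P := integral_nonneg (fun ω => abs_nonneg _)
    positivity
  -- choose n
  obtain ⟨n, hngt⟩ := exists_nat_gt (max 1 (2 * CY / L))
  have hn1 : 1 ≤ n := by
    have := (le_max_left 1 (2*CY/L)).trans_lt hngt
    exact_mod_cast Nat.one_le_iff_ne_zero.mpr (by
      intro h; rw [h] at this; norm_num at this)
  have hn0 : (0:ℝ) < n := by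
    have : (1:ℝ) ≤ n := by exact_mod_cast hn1
    linarith
  have hexp_small : Real.exp (-(n:ℝ)/2) * CY < L := by
    have h1 : Real.exp (-(n:ℝ)/2) ≤ 2/(n:ℝ) := by
      have ha : (n:ℝ)/2 ≤ Real.exp ((n:ℝ)/2) := by
        linarith [Real.add_one_le_exp ((n:ℝ)/2)]
      have hb : Real.exp (-(n:ℝ)/2) = (Real.exp ((n:ℝ)/2))⁻¹ := by
        rw [← Real.exp_neg]; ring_nf
      rw [hb, show 2/(n:ℝ) = ((n:ℝ)/2)⁻¹ from by rw [inv_div]]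
      exact inv_anti₀ (by positivity) ha
    have h2 : 2 * CY / L < n := (le_max_right _ _).trans_lt hngt
    have h3 : 2 * CY < n * L := by
      rw [div_lt_iff₀ hL0] at h2; linarith
    calc Real.exp (-(n:ℝ)/2) * CY ≤ (2/(n:ℝ)) * CY := by
          apply mul_le_mul_of_nonneg_right h1 hCY0
      _ < L := by rw [div_mul_eq_mul_div, div_lt_iff₀ hn0]; ring_nf; ring_nf at h3; linarith
  -- obtain the utility function
  obtain ⟨u, hu_meas, hu_util, hu_RA, hu_mono, hu_c, hdom, hlow, hupper⟩ :=
    exists_utility hIopen hIconn hv hcI hc₂I hcc₁ hc₁c₂ n hn1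
  -- integrability
  have hIntX : Integrable (fun ω => u (X ω)) P := by
    apply Integrable.mono' (g := fun ω => |v (X ω)| + |v c|)
      (hL1X.2.2.abs.add (integrable_const _))
      ((hu_meas.comp hL1X.1).aestronglyMeasurable)
    filter_upwards [hL1X.2.1] with ω hω
    rw [Real.norm_eq_abs]
    calc |u (X ω)| ≤ |v (X ω) - v c| := hdom _ hω
      _ ≤ |v (X ω)| + |v c| := abs_sub _ _
  have hIntY : Integrable (fun ω => u (Y ω)) P := by
    apply Integrable.mono' (g := fun ω => |v (Y ω)| + |v c|)
      (hL1Y.2.2.abs.add (integrable_const _))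
      ((hu_meas.comp hL1Y.1).aestronglyMeasurable)
    filter_upwards [hL1Y.2.1] with ω hω
    rw [Real.norm_eq_abs]
    calc |u (Y ω)| ≤ |v (Y ω) - v c| := hdom _ hω
      _ ≤ |v (Y ω)| + |v c| := abs_sub _ _
  have happly := hvsd u hu_util hu_RA hIntX hIntY
  -- lower bound for ∫ u(X)
  have hlower : u b ≤ ∫ ω, u (X ω) ∂P := by
    have hae : ∀ᵐ ω ∂P, (fun _ => u b) ω ≤ u (X ω) := by
      filter_upwards [hXae] with ω ⟨h1, h2⟩
      exact hu_mono hbI h1 h2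
    have := MeasureTheory.integral_mono_ae (integrable_const (u b)) hIntX hae
    rwa [integral_const, probReal_univ, one_smul] at this
  -- upper bound for ∫ u(Y)
  obtain ⟨A, hAdef⟩ : ∃ A : Set Ω, A = {ω | c ≤ Y ω} := ⟨_, rfl⟩
  have hAmeas : MeasurableSet A := by
    rw [hAdef]; exact measurableSet_le measurable_const hL1Y.1
  have hAc : (P A).toReal = 1 - p := by
    have hcompl : A = {ω | Y ω < c}ᶜ := by
      rw [hAdef]; ext ω; simp [not_lt]
    rw [hcompl, measure_compl (measurableSet_lt hL1Y.1 measurable_const) (measure_ne_top _ _),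
      measure_univ,
      ENNReal.toReal_sub_of_le prob_le_one ENNReal.one_ne_top, ENNReal.toReal_one, hpdef]
  obtain ⟨g, hgdef⟩ : ∃ g : Ω → ℝ, g = fun ω => u c + A.indicator
      (fun ω => (u c₂ - u c) + Real.exp (-(n:ℝ)/2) * (|v (Y ω)| + |v c₂|)) ω :=
    ⟨_, rfl⟩
  have hw0 : Integrable (fun ω => |v (Y ω)| + |v c₂|) P :=
    hL1Y.2.2.abs.add (integrable_const _)
  have hw1 : Integrable (fun ω => Real.exp (-(n:ℝ)/2) * (|v (Y ω)| + |v c₂|)) P :=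
    hw0.const_mul _
  have hw_int : Integrable (fun ω => (u c₂ - u c) +
      Real.exp (-(n:ℝ)/2) * (|v (Y ω)| + |v c₂|)) P :=
    (integrable_const _).add hw1
  have hg_int : Integrable g P := by
    rw [hgdef]
    exact (integrable_const _).add (hw_int.indicator hAmeas)
  have hg_ae : ∀ᵐ ω ∂P, u (Y ω) ≤ g ω := by
    filter_upwards [hL1Y.2.1] with ω hω
    simp only [hgdef]
    by_cases hYc : c ≤ Y ω
    · have hmem : ω ∈ A := by rw [hAdef]; exact hYc
      rw [Set.indicator_of_mem hmem]
      by_cases hYc₂ : Y ω ≤ c₂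
      · have h1 : u (Y ω) ≤ u c₂ := hu_mono hω hc₂I hYc₂
        have h2 : 0 ≤ Real.exp (-(n:ℝ)/2) * (|v (Y ω)| + |v c₂|) := by positivity
        linarith
      · push_neg at hYc₂
        have h1 := hupper (Y ω) hω hYc₂.le
        have h2 : v (Y ω) - v c₂ ≤ |v (Y ω)| + |v c₂| := by
          calc v (Y ω) - v c₂ ≤ |v (Y ω) - v c₂| := le_abs_self _
            _ ≤ |v (Y ω)| + |v c₂| := abs_sub _ _
        have h3 : Real.exp (-(n:ℝ)/2) * (v (Y ω) - v c₂)
            ≤ Real.exp (-(n:ℝ)/2) * (|v (Y ω)| + |v c₂|) :=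
          mul_le_mul_of_nonneg_left h2 (Real.exp_pos _).le
        linarith
    · push_neg at hYc
      have hmem : ω ∉ A := by rw [hAdef]; simp [not_le.mpr hYc]
      rw [Set.indicator_of_notMem hmem]
      have := hu_mono hω hcI hYc.le
      linarith
  have hgY : ∫ ω, u (Y ω) ∂P ≤ ∫ ω, g ω ∂P :=
    MeasureTheory.integral_mono_ae hIntY hg_int hg_ae
  -- compute/bound ∫ g
  have hg_val : ∫ ω, g ω ∂P ≤ u c + (1 - p) * (u c₂ - u c)
      + Real.exp (-(n:ℝ)/2) * CY := by
    rw [hgdef]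
    rw [integral_add (integrable_const _) (hw_int.indicator hAmeas),
      integral_const, probReal_univ, one_smul,
      MeasureTheory.integral_indicator hAmeas]
    have hsplit : ∫ ω in A, ((u c₂ - u c) +
        Real.exp (-(n:ℝ)/2) * (|v (Y ω)| + |v c₂|)) ∂P
        = (P A).toReal * (u c₂ - u c) +
          Real.exp (-(n:ℝ)/2) * ∫ ω in A, (|v (Y ω)| + |v c₂|) ∂P := by
      rw [integral_add (integrable_const _) hw1.integrableOn,
        setIntegral_const, MeasureTheory.integral_const_mul]
      simp [smul_eq_mul, Measure.real]
    rw [hsplit, hAc]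
    have hbound : ∫ ω in A, (|v (Y ω)| + |v c₂|) ∂P ≤ CY := by
      rw [hCYdef]
      have h1 : ∫ ω in A, (|v (Y ω)| + |v c₂|) ∂P
          ≤ ∫ ω, (|v (Y ω)| + |v c₂|) ∂P := by
        apply MeasureTheory.setIntegral_le_integral hw0
        filter_upwards with ω
        simp only [Pi.zero_apply]
        positivity
      have h2 : ∫ ω, (|v (Y ω)| + |v c₂|) ∂P
          = (∫ ω, |v (Y ω)| ∂P) + |v c₂| := by
        rw [integral_add hL1Y.2.2.abs (integrable_const _), integral_const,
          probReal_univ, one_smul]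
      linarith
    have := mul_le_mul_of_nonneg_left hbound (Real.exp_pos (-(n:ℝ)/2)).le
    linarith
  -- final contradiction
  have hc₂c : u c₁ ≤ u c₂ - u c := by
    have := hu_mono hc₁I hc₂I hc₁c₂.le
    linarith [hu_c]
  have hLc : L ≤ p * (u c₂ - u c) := by
    rw [hLdef]
    calc Real.exp (-1) * p * (v c₁ - v c) = p * (Real.exp (-1) * (v c₁ - v c)) := by ring
      _ ≤ p * u c₁ := mul_le_mul_of_nonneg_left hlow hp0.le
      _ ≤ p * (u c₂ - u c) := mul_le_mul_of_nonneg_left hc₂c hp0.le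
  have hbc₂ : u c₂ ≤ u b := hu_mono hc₂I hbI hc₂b.le
  -- chain
  have : u b < u b := by
    calc u b ≤ ∫ ω, u (X ω) ∂P := hlower
      _ ≤ ∫ ω, u (Y ω) ∂P := happly
      _ ≤ ∫ ω, g ω ∂P := hgY
      _ ≤ u c + (1 - p) * (u c₂ - u c) + Real.exp (-(n:ℝ)/2) * CY := hg_val
      _ = u c₂ - p * (u c₂ - u c) + Real.exp (-(n:ℝ)/2) * CY := by ring
      _ < u c₂ - L + L := by linarith [hexp_small, hLc]
      _ = u c₂ := by ring
      _ ≤ u b := hbc₂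
  exact absurd this (lt_irrefl _)

end AuxRev

/-- If the threshold utility `v ∈ 𝒰(I)` satisfies the
Inada-type condition `liminf_{x ↑ sup I} v′(x) = 0` or
`limsup_{x ↓ inf I} v′(x) = ∞` (expressed via the frequently-quantifiers below),
then a positively homogeneous monetary risk measure `ρ` on `𝒳` is
`v`-SD-consistent iff it is the worst-case risk measure. -/
theorem statement14 (P : Measure Ω) [IsProbabilityMeasure P] (hP : Atomless P)
    (I : Set ℝ) (hIopen : IsOpen I) (hIconn : I.OrdConnected) (hIne : I.Nonempty)
    (v : ℝ → ℝ) (hv : IsUtility I v)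
    (hInada : (∀ ε : ℝ, 0 < ε → ∀ b ∈ I, ∃ x ∈ I, b ≤ x ∧ deriv v x < ε) ∨
      (∀ M : ℝ, ∀ b ∈ I, ∃ x ∈ I, x ≤ b ∧ M < deriv v x))
    (ρ : (Ω → ℝ) → ℝ) (hρ : IsRiskMeasure P ρ)
    (hph : ∀ X : Ω → ℝ, MemX P X → ∀ t : ℝ, 0 < t →
      ρ (fun ω => t * X ω) = t * ρ X) :
    VSDConsistent P I v {X | MemX P X} ρ ↔
      (∀ X : Ω → ℝ, MemX P X → ρ X = rhoW P X) := by
  constructor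
  · intro hcons X hX
    exact le_antisymm (rho_le_rhoW P hρ hph hX)
      (rho_ge_rhoW P hIopen hIconn hIne hv hInada hρ hph hcons hX)
  · intro hw X Y hX hY hL1X hL1Y hvsd
    rw [hw Y hY, hw X hX]
    exact rhoW_consistent P hIopen hIconn hv hX hY hL1X hL1Y hvsd

end Paper
end
end

section
/- Let κ be a loss-based return risk measure whose associated risk measure ρ_κ(Y) = log(κ(e^{−Y})) is positively homogeneous (ρ_κ(tY) = tρ_κ(Y) for all Y ∈ 𝒳 and t > 0). Then κ is SSD-consistent on 𝓔 in the loss-based sense (for all L, L′ ∈ 𝓔, −L ≤_SSD −L′ implies κ(L) ≥ κ(L′)) if and only if κ(L) = M(L) := inf{x ∈ ℝ : L ≤ x ℙ-a.s.} = ess sup L for all L ∈ 𝓔. -/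
open MeasureTheory Filter Set

noncomputable section

namespace Paper

variable {Ω : Type*} [MeasurableSpace Ω]

/-- The essential-sup candidate `sInf S` is an a.s. upper bound. -/
lemma aux_sInf_ae_le {P : Measure Ω} [IsProbabilityMeasure P] {L : Ω → ℝ}
    (hne : {x : ℝ | ∀ᵐ ω ∂P, L ω ≤ x}.Nonempty)
    (hbd : BddBelow {x : ℝ | ∀ᵐ ω ∂P, L ω ≤ x}) :
    ∀ᵐ ω ∂P, L ω ≤ sInf {x : ℝ | ∀ᵐ ω ∂P, L ω ≤ x} := by
  set S := {x : ℝ | ∀ᵐ ω ∂P, L ω ≤ x} with hS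
  have h : ∀ n : ℕ, ∀ᵐ ω ∂P, L ω ≤ sInf S + 1 / (n + 1) := by
    intro n
    have hlt : sInf S < sInf S + 1 / (n + 1) := by
      have : (0:ℝ) < 1 / (n + 1) := by positivity
      linarith
    obtain ⟨x, hxS, hx⟩ := (csInf_lt_iff hbd hne).mp hlt
    filter_upwards [hxS] with ω hω
    exact hω.trans hx.le
  have h2 : ∀ᵐ ω ∂P, ∀ n : ℕ, L ω ≤ sInf S + 1 / (n + 1) := ae_all_iff.mpr h
  filter_upwards [h2] with ω hω
  refine le_of_forall_pos_le_add fun ε hε => ?_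
  obtain ⟨n, hn⟩ := exists_nat_one_div_lt hε
  exact (hω n).trans (by linarith)

/-- Integrability from a.e. equality to a measurable function plus an a.e. bound. -/
lemma aux_integrable {P : Measure Ω} [IsProbabilityMeasure P] {f g : Ω → ℝ}
    (hg : Measurable g) (hfg : f =ᵐ[P] g) {D : ℝ} (hb : ∀ᵐ ω ∂P, ‖f ω‖ ≤ D) :
    Integrable f P :=
  (integrable_const D).mono' (hg.aestronglyMeasurable.congr hfg.symm) hb

/-- SSD between a.e.-equal random variables. -/
lemma aux_ssd_of_ae_eq {P : Measure Ω} {X X' : Ω → ℝ} (h : X =ᵐ[P] X') :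
    SSD P X X' := fun _ _ _ _ _ =>
  le_of_eq (integral_congr_ae (h.mono fun _ hω => by simp only [hω]))


/-- Helper utility: `x ↦ -exp(-t x)` has first derivative `t * exp(-t x)`. -/
lemma aux_hasDeriv (t : ℝ) (x : ℝ) :
    HasDerivAt (fun y : ℝ => -Real.exp (-t * y)) (t * Real.exp (-t * x)) x := by
  have h1 : HasDerivAt (fun y : ℝ => -t * y) (-t) x := by
    simpa using (hasDerivAt_id x).const_mul (-t)
  have h2 : HasDerivAt (fun y : ℝ => -Real.exp (-t * y)) (-(Real.exp (-t * x) * -t)) x :=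
    h1.exp.neg
  convert h2 using 1
  ring

lemma aux_deriv (t : ℝ) :
    deriv (fun y : ℝ => -Real.exp (-t * y)) = fun x => t * Real.exp (-t * x) :=
  funext fun x => (aux_hasDeriv t x).deriv

lemma aux_hasDeriv2 (t : ℝ) (x : ℝ) :
    HasDerivAt (deriv (fun y : ℝ => -Real.exp (-t * y)))
      (t * (Real.exp (-t * x) * -t)) x := by
  rw [aux_deriv]
  have h1 : HasDerivAt (fun y : ℝ => -t * y) (-t) x := by
    simpa using (hasDerivAt_id x).const_mul (-t)
  exact h1.exp.const_mul t

lemma aux_utility {t : ℝ} (ht : 0 < t) :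
    IsUtility Set.univ (fun y : ℝ => -Real.exp (-t * y)) :=
  ⟨fun x _ => (aux_hasDeriv t x).differentiableAt,
   fun x _ => (aux_hasDeriv2 t x).differentiableAt,
   fun x _ => by rw [aux_deriv]; positivity⟩

lemma aux_concave {t : ℝ} (ht : 0 < t) :
    ConcaveOn ℝ Set.univ (fun y : ℝ => -Real.exp (-t * y)) := by
  apply concaveOn_of_deriv2_nonpos convex_univ
  · exact fun x _ => (aux_hasDeriv t x).differentiableAt.continuousAt.continuousWithinAt
  · exact fun x _ => (aux_hasDeriv t x).differentiableAt.differentiableWithinAt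
  · exact fun x _ => (aux_hasDeriv2 t x).differentiableAt.differentiableWithinAt
  · intro x _
    show deriv (deriv (fun y : ℝ => -Real.exp (-t * y))) x ≤ 0
    rw [(aux_hasDeriv2 t x).deriv]
    have h2 : t * (Real.exp (-t * x) * -t) = -(t * t * Real.exp (-t * x)) := by ring
    rw [h2, neg_nonpos]
    positivity

/-- Let `κ` be a loss-based return risk measure whose
associated risk measure `ρ_κ(Y) = log (κ (e^{-Y}))` is positively homogeneous.
Then `κ` is SSD-consistent on `𝓔` in the loss-based sense iff
`κ(L) = M(L) = inf {x : L ≤ x a.s.} = ess sup L` for all `L ∈ 𝓔`. -/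
theorem statement15 (P : Measure Ω) [IsProbabilityMeasure P] (hP : Atomless P)
    (κ : (Ω → ℝ) → ℝ) (hκ : IsLossRRM P κ)
    (hph : ∀ Y : Ω → ℝ, MemX P Y → ∀ t : ℝ, 0 < t →
      Real.log (κ (fun ω => Real.exp (-(t * Y ω)))) =
        t * Real.log (κ (fun ω => Real.exp (-(Y ω))))) :
    (∀ L L' : Ω → ℝ, MemE P L → MemE P L' →
        SSD P (fun ω => -L ω) (fun ω => -L' ω) → κ L' ≤ κ L) ↔
      (∀ L : Ω → ℝ, MemE P L → κ L = sInf {x : ℝ | ∀ᵐ ω ∂P, L ω ≤ x}) := by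
  have hpos := hκ.1
  have hmono := hκ.2.1
  have hhomog := hκ.2.2
  -- κ of positive constants
  have hone : κ (fun _ : Ω => (1 : ℝ)) = 1 := by
    have hX : MemX P (fun _ : Ω => (0 : ℝ)) :=
      ⟨measurable_const, 0, Filter.Eventually.of_forall fun ω => by simp⟩
    have h0 := hph (fun _ => 0) hX 2 two_pos
    simp only [mul_zero, neg_zero, Real.exp_zero] at h0
    have h1 : Real.log (κ (fun _ : Ω => (1 : ℝ))) = 0 := by linarith
    have h2 : 0 < κ (fun _ : Ω => (1 : ℝ)) :=
      hpos _ ⟨⟨measurable_const, 1, Filter.Eventually.of_forall fun ω => by norm_num⟩,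
        Filter.Eventually.of_forall fun ω => one_pos⟩
    rcases Real.log_eq_zero.mp h1 with h | h | h <;> linarith
  have hconstC : ∀ c : ℝ, 0 < c → MemC P (fun _ : Ω => c) := fun c hc =>
    ⟨⟨measurable_const, |c|, Filter.Eventually.of_forall fun ω => le_refl _⟩,
      Filter.Eventually.of_forall fun ω => hc⟩
  have hconst : ∀ c : ℝ, 0 < c → κ (fun _ : Ω => c) = c := by
    intro c hc
    have h := hhomog (fun _ => 1) (hconstC 1 one_pos) c hc
    simp only [mul_one] at h
    rw [h, hone, mul_one]
  constructor
  · -- SSD consistency implies worst case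
    intro hcons L hL
    obtain ⟨Y, ⟨hYm, C, hYb⟩, hLY⟩ := hL
    set S := {x : ℝ | ∀ᵐ ω ∂P, L ω ≤ x} with hSdef
    have hub : Real.exp C ∈ S := by
      filter_upwards [hYb, hLY] with ω h1 h2
      rw [h2]; exact Real.exp_le_exp.mpr (le_of_abs_le h1)
    have hlb : ∀ x ∈ S, Real.exp (-C) ≤ x := by
      intro x hx
      obtain ⟨ω, h1, h2, h3⟩ := (hYb.and (hLY.and hx)).exists
      calc Real.exp (-C) ≤ Real.exp (Y ω) := Real.exp_le_exp.mpr (neg_le_of_abs_le h1)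
        _ = L ω := h2.symm
        _ ≤ x := h3
    have hne : S.Nonempty := ⟨_, hub⟩
    have hbd : BddBelow S := ⟨_, hlb⟩
    have hMpos : 0 < sInf S := lt_of_lt_of_le (Real.exp_pos _) (le_csInf hne hlb)
    have hMS : ∀ᵐ ω ∂P, L ω ≤ sInf S := aux_sInf_ae_le hne hbd
    have hgE : MemE P (fun ω => Real.exp (Y ω)) :=
      ⟨Y, ⟨hYm, C, hYb⟩, Filter.Eventually.of_forall fun _ => rfl⟩
    have hLE : MemE P L := ⟨Y, ⟨hYm, C, hYb⟩, hLY⟩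
    have hgm : Measurable fun ω => Real.exp (Y ω) := Real.measurable_exp.comp hYm
    have hgC : MemC P (fun ω => Real.exp (Y ω)) := by
      refine ⟨⟨hgm, Real.exp C, ?_⟩, Filter.Eventually.of_forall fun ω => Real.exp_pos _⟩
      filter_upwards [hYb] with ω h
      rw [abs_of_pos (Real.exp_pos _)]
      exact Real.exp_le_exp.mpr (le_of_abs_le h)
    have hκeq : κ L = κ (fun ω => Real.exp (Y ω)) :=
      le_antisymm
        (hcons (fun ω => Real.exp (Y ω)) L hgE hLE
          (aux_ssd_of_ae_eq (hLY.mono fun ω h => by dsimp only; rw [h])))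
        (hcons L (fun ω => Real.exp (Y ω)) hLE hgE
          (aux_ssd_of_ae_eq (hLY.mono fun ω h => by dsimp only; rw [h])))
    have hupper : κ (fun ω => Real.exp (Y ω)) ≤ sInf S := by
      have h := hmono (fun _ => sInf S) (fun ω => Real.exp (Y ω)) (hconstC _ hMpos) hgC
        (by filter_upwards [hMS, hLY] with ω h1 h2; rw [← h2]; exact h1)
      rwa [hconst _ hMpos] at h
    -- mean bound from SSD consistency (via Jensen)
    have hmean : ∀ Z : Ω → ℝ, Measurable Z → ∀ D : ℝ, (∀ᵐ ω ∂P, |Z ω| ≤ D) →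
        (∫ ω, Real.exp (Z ω) ∂P) ≤ κ (fun ω => Real.exp (Z ω)) := by
      intro Z hZm D hZb
      have hAm : Measurable fun ω => Real.exp (Z ω) := Real.measurable_exp.comp hZm
      have hAb : ∀ᵐ ω ∂P, ‖Real.exp (Z ω)‖ ≤ Real.exp D := by
        filter_upwards [hZb] with ω h
        rw [Real.norm_eq_abs, abs_of_pos (Real.exp_pos _)]
        exact Real.exp_le_exp.mpr (le_of_abs_le h)
      have hAint : Integrable (fun ω => Real.exp (Z ω)) P :=
        aux_integrable hAm EventuallyEq.rfl hAb
      set c := ∫ ω, Real.exp (Z ω) ∂P with hc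
      have hclb : Real.exp (-D) ≤ c := by
        have h := integral_mono_ae (integrable_const (Real.exp (-D))) hAint
          (by filter_upwards [hZb] with ω h
              exact Real.exp_le_exp.mpr (neg_le_of_abs_le h))
        simpa using h
      have hcpos : 0 < c := lt_of_lt_of_le (Real.exp_pos _) hclb
      have hcE : MemE P (fun _ : Ω => c) :=
        ⟨fun _ => Real.log c,
          ⟨measurable_const, |Real.log c|, Filter.Eventually.of_forall fun _ => le_refl _⟩,
          Filter.Eventually.of_forall fun _ => (Real.exp_log hcpos).symm⟩
      have hZE : MemE P (fun ω => Real.exp (Z ω)) :=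
        ⟨Z, ⟨hZm, D, hZb⟩, Filter.Eventually.of_forall fun _ => rfl⟩
      have hssd0 : SSD P (fun ω => -(fun ω' => Real.exp (Z ω')) ω)
          (fun ω => -(fun _ : Ω => c) ω) := by
        intro u hu hconc hiX hiY
        have hint : (∫ ω, u (-(fun _ : Ω => c) ω) ∂P) = u (-c) := by
          simp
        rw [hint]
        have hjen := hconc.le_map_integral (f := fun ω => -Real.exp (Z ω))
          (fun x _ => (hu.1 x (mem_univ x)).continuousAt.continuousWithinAt)
          isClosed_univ (Filter.Eventually.of_forall fun ω => mem_univ _)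
          hAint.neg (by exact hiX)
        rw [integral_neg] at hjen
        exact hjen
      have h := hcons (fun ω => Real.exp (Z ω)) (fun _ => c) hZE hcE hssd0
      rwa [hconst c hcpos] at h
    have hκgpos : 0 < κ (fun ω => Real.exp (Y ω)) := hpos _ hgC
    have hlower : ∀ ε : ℝ, 0 < ε →
        Real.log (sInf S) - ε ≤ Real.log (κ (fun ω => Real.exp (Y ω))) := by
      intro ε hε
      set m := Real.log (sInf S) with hm
      set A := {ω | m - ε < Y ω} with hA
      have hAmeas : MeasurableSet A := measurableSet_lt measurable_const hYm
      have hPA : 0 < P A := by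
        by_contra h
        push_neg at h
        have h0 : P A = 0 := le_antisymm (by simpa using h) (by positivity)
        have hmem : sInf S * Real.exp (-ε) ∈ S := by
          filter_upwards [measure_eq_zero_iff_ae_notMem.mp h0, hLY] with ω h1 h2
          have hYle : Y ω ≤ m - ε := by simpa [hA] using h1
          rw [h2]
          calc Real.exp (Y ω) ≤ Real.exp (m - ε) := Real.exp_le_exp.mpr hYle
            _ = sInf S * Real.exp (-ε) := by
                rw [sub_eq_add_neg, Real.exp_add, hm, Real.exp_log hMpos]
        have h3 := csInf_le hbd hmem
        have h4 : Real.exp (-ε) < 1 := Real.exp_lt_one_iff.mpr (by linarith)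
        nlinarith
      set p := (P A).toReal with hp
      have hppos : 0 < p := ENNReal.toReal_pos hPA.ne' (measure_ne_top P A)
      have hp1 : p ≤ 1 := by
        rw [hp]
        simpa using ENNReal.toReal_mono ENNReal.one_ne_top prob_le_one
      have hlogp : Real.log p ≤ 0 := Real.log_nonpos hppos.le hp1
      have hkey : ∀ t : ℝ, 0 < t →
          t * (m - ε) + Real.log p ≤ t * Real.log (κ (fun ω => Real.exp (Y ω))) := by
        intro t ht
        have hhom : Real.log (κ (fun ω => Real.exp (t * Y ω))) =
            t * Real.log (κ (fun ω => Real.exp (Y ω))) := by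
          have h := hph (fun ω => -Y ω) ⟨hYm.neg, C, by simpa using hYb⟩ t ht
          simpa [mul_neg, neg_neg] using h
        have hint : Integrable (fun ω => Real.exp (t * Y ω)) P := by
          refine aux_integrable (Real.measurable_exp.comp (hYm.const_mul t))
            EventuallyEq.rfl (D := Real.exp (|t| * C)) ?_
          filter_upwards [hYb] with ω h
          rw [Real.norm_eq_abs, abs_of_pos (Real.exp_pos _)]
          apply Real.exp_le_exp.mpr
          calc t * Y ω ≤ |t * Y ω| := le_abs_self _
            _ = |t| * |Y ω| := abs_mul t (Y ω)
            _ ≤ |t| * C := mul_le_mul_of_nonneg_left h (abs_nonneg t)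
        have hil : Real.exp (t * (m - ε)) * p ≤ ∫ ω, Real.exp (t * Y ω) ∂P := by
          have hindint : Integrable (A.indicator fun _ => Real.exp (t * (m - ε))) P :=
            (integrable_const _).indicator hAmeas
          have hle : ∀ ω, A.indicator (fun _ => Real.exp (t * (m - ε))) ω
              ≤ Real.exp (t * Y ω) := by
            intro ω
            by_cases hω : ω ∈ A
            · rw [Set.indicator_of_mem hω]
              exact Real.exp_le_exp.mpr
                (mul_le_mul_of_nonneg_left (le_of_lt hω) ht.le)
            · rw [Set.indicator_of_notMem hω]
              exact (Real.exp_pos _).le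
          have h := integral_mono_ae hindint hint (Filter.Eventually.of_forall hle)
          rwa [integral_indicator_const _ hAmeas, smul_eq_mul, mul_comm] at h
        have h2 := hmean (fun ω => t * Y ω) (hYm.const_mul t) (|t| * C)
          (by
            filter_upwards [hYb] with ω h
            calc |t * Y ω| = |t| * |Y ω| := abs_mul t (Y ω)
              _ ≤ |t| * C := mul_le_mul_of_nonneg_left h (abs_nonneg t))
        have h3 : Real.exp (t * (m - ε)) * p ≤ κ (fun ω => Real.exp (t * Y ω)) :=
          hil.trans h2
        have h4 := Real.log_le_log (by positivity) h3
        rwa [Real.log_mul (Real.exp_ne_zero _) hppos.ne', Real.log_exp, hhom] at h4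
      by_contra hcon
      push_neg at hcon
      set d := Real.log (κ (fun ω => Real.exp (Y ω))) - (m - ε) with hd
      have hdneg : d < 0 := by rw [hd]; linarith
      set t0 := (Real.log p - 1) / d with ht0
      have ht0pos : 0 < t0 := div_pos_of_neg_of_neg (by linarith) hdneg
      have hk := hkey t0 ht0pos
      have ht0d : t0 * d = Real.log p - 1 := by
        rw [ht0]; exact div_mul_cancel₀ _ hdneg.ne
      have hx : t0 * Real.log (κ (fun ω => Real.exp (Y ω))) = t0 * (m - ε) + t0 * d := by
        rw [hd]; ring
      linarith
    have hlog : Real.log (sInf S) ≤ Real.log (κ (fun ω => Real.exp (Y ω))) :=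
      le_of_forall_pos_le_add fun ε hε => by linarith [hlower ε hε]
    have hfin : sInf S ≤ κ (fun ω => Real.exp (Y ω)) := by
      have h := Real.exp_le_exp.mpr hlog
      rwa [Real.exp_log hMpos, Real.exp_log hκgpos] at h
    rw [hκeq]
    exact le_antisymm hupper hfin
  · -- worst case implies SSD consistency
    intro hval L L' hLE hL'E hssd
    obtain ⟨Y, ⟨hYm, C, hYb⟩, hLY⟩ := id hLE
    obtain ⟨Y', ⟨hY'm, C', hY'b⟩, hL'Y'⟩ := id hL'E
    rw [hval L hLE, hval L' hL'E]
    set S := {x : ℝ | ∀ᵐ ω ∂P, L ω ≤ x} with hSdef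
    set S' := {x : ℝ | ∀ᵐ ω ∂P, L' ω ≤ x} with hS'def
    have hub : Real.exp C ∈ S := by
      filter_upwards [hYb, hLY] with ω h1 h2
      rw [h2]; exact Real.exp_le_exp.mpr (le_of_abs_le h1)
    have hlb : ∀ x ∈ S, Real.exp (-C) ≤ x := by
      intro x hx
      obtain ⟨ω, h1, h2, h3⟩ := (hYb.and (hLY.and hx)).exists
      calc Real.exp (-C) ≤ Real.exp (Y ω) := Real.exp_le_exp.mpr (neg_le_of_abs_le h1)
        _ = L ω := h2.symm
        _ ≤ x := h3
    have hne : S.Nonempty := ⟨_, hub⟩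
    have hbd : BddBelow S := ⟨_, hlb⟩
    have hMpos : 0 < sInf S := lt_of_lt_of_le (Real.exp_pos _) (le_csInf hne hlb)
    have hMS : ∀ᵐ ω ∂P, L ω ≤ sInf S := aux_sInf_ae_le hne hbd
    have hub' : Real.exp C' ∈ S' := by
      filter_upwards [hY'b, hL'Y'] with ω h1 h2
      rw [h2]; exact Real.exp_le_exp.mpr (le_of_abs_le h1)
    have hlb' : ∀ x ∈ S', Real.exp (-C') ≤ x := by
      intro x hx
      obtain ⟨ω, h1, h2, h3⟩ := (hY'b.and (hL'Y'.and hx)).exists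
      calc Real.exp (-C') ≤ Real.exp (Y' ω) := Real.exp_le_exp.mpr (neg_le_of_abs_le h1)
        _ = L' ω := h2.symm
        _ ≤ x := h3
    have hne' : S'.Nonempty := ⟨_, hub'⟩
    have hbd' : BddBelow S' := ⟨_, hlb'⟩
    by_contra hcon
    push_neg at hcon
    set a := (sInf S + sInf S') / 2 with ha
    have haM : sInf S < a := by rw [ha]; linarith
    have haM' : a < sInf S' := by rw [ha]; linarith
    have hapos : 0 < a := lt_trans hMpos haM
    set A := {ω | Real.log a < Y' ω} with hA
    have hAmeas : MeasurableSet A := measurableSet_lt measurable_const hY'm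
    have hPA : 0 < P A := by
      by_contra h
      push_neg at h
      have h0 : P A = 0 := le_antisymm (by simpa using h) (by positivity)
      have hmem : a ∈ S' := by
        filter_upwards [measure_eq_zero_iff_ae_notMem.mp h0, hL'Y'] with ω h1 h2
        have hY'le : Y' ω ≤ Real.log a := by simpa [hA] using h1
        rw [h2]
        calc Real.exp (Y' ω) ≤ Real.exp (Real.log a) := Real.exp_le_exp.mpr hY'le
          _ = a := Real.exp_log hapos
      have h3 := csInf_le hbd' hmem
      linarith
    set p := (P A).toReal with hp
    have hppos : 0 < p := ENNReal.toReal_pos hPA.ne' (measure_ne_top P A)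
    have hp1 : p ≤ 1 := by
      rw [hp]
      simpa using ENNReal.toReal_mono ENNReal.one_ne_top prob_le_one
    have hlogp : Real.log p ≤ 0 := Real.log_nonpos hppos.le hp1
    set t0 := (Real.log p - 1) / (sInf S - a) with ht0
    have hdneg : sInf S - a < 0 := by linarith
    have ht0pos : 0 < t0 := div_pos_of_neg_of_neg (by linarith) hdneg
    -- integrability of the utility evaluations
    have hiL : Integrable (fun ω => -Real.exp (-t0 * -L ω)) P := by
      refine aux_integrable (g := fun ω => -Real.exp (t0 * Real.exp (Y ω)))
        ((Real.measurable_exp.comp ((Real.measurable_exp.comp hYm).const_mul t0)).neg)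
        ?_ (D := Real.exp (t0 * Real.exp C)) ?_
      · filter_upwards [hLY] with ω hω
        rw [hω, neg_mul_neg]
      · filter_upwards [hLY, hYb] with ω h1 h2
        rw [norm_neg, Real.norm_eq_abs, abs_of_pos (Real.exp_pos _), neg_mul_neg, h1]
        apply Real.exp_le_exp.mpr
        exact mul_le_mul_of_nonneg_left
          (Real.exp_le_exp.mpr (le_of_abs_le h2)) ht0pos.le
    have hiL' : Integrable (fun ω => -Real.exp (-t0 * -L' ω)) P := by
      refine aux_integrable (g := fun ω => -Real.exp (t0 * Real.exp (Y' ω)))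
        ((Real.measurable_exp.comp ((Real.measurable_exp.comp hY'm).const_mul t0)).neg)
        ?_ (D := Real.exp (t0 * Real.exp C')) ?_
      · filter_upwards [hL'Y'] with ω hω
        rw [hω, neg_mul_neg]
      · filter_upwards [hL'Y', hY'b] with ω h1 h2
        rw [norm_neg, Real.norm_eq_abs, abs_of_pos (Real.exp_pos _), neg_mul_neg, h1]
        apply Real.exp_le_exp.mpr
        exact mul_le_mul_of_nonneg_left
          (Real.exp_le_exp.mpr (le_of_abs_le h2)) ht0pos.le
    have hssd0 := hssd (fun y => -Real.exp (-t0 * y)) (aux_utility ht0pos)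
      (aux_concave ht0pos) hiL hiL'
    have hLHS : -Real.exp (t0 * sInf S) ≤ ∫ ω, -Real.exp (-t0 * -L ω) ∂P := by
      have h := integral_mono_ae (integrable_const (-Real.exp (t0 * sInf S))) hiL
        (by
          filter_upwards [hMS] with ω hω
          rw [neg_mul_neg]
          exact neg_le_neg (Real.exp_le_exp.mpr
            (mul_le_mul_of_nonneg_left hω ht0pos.le)))
      simpa using h
    have hRHS : (∫ ω, -Real.exp (-t0 * -L' ω) ∂P) ≤ p * -Real.exp (t0 * a) := by
      have hindint : Integrable (A.indicator fun _ => -Real.exp (t0 * a)) P :=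
        (integrable_const _).indicator hAmeas
      have h := integral_mono_ae hiL' hindint (by
        filter_upwards [hL'Y'] with ω hω
        by_cases hmem : ω ∈ A
        · rw [Set.indicator_of_mem hmem, neg_mul_neg, hω]
          apply neg_le_neg
          apply Real.exp_le_exp.mpr
          refine mul_le_mul_of_nonneg_left ?_ ht0pos.le
          have hlt : Real.log a < Y' ω := hmem
          calc a = Real.exp (Real.log a) := (Real.exp_log hapos).symm
            _ ≤ Real.exp (Y' ω) := Real.exp_le_exp.mpr hlt.le
        · rw [Set.indicator_of_notMem hmem]
          have := Real.exp_pos (-t0 * -L' ω)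
          linarith)
      rwa [integral_indicator_const _ hAmeas, smul_eq_mul] at h
    have hchain : p * Real.exp (t0 * a) ≤ Real.exp (t0 * sInf S) := by
      have h := (hLHS.trans hssd0).trans hRHS
      nlinarith
    have hlogineq := Real.log_le_log (by positivity) hchain
    rw [Real.log_mul hppos.ne' (Real.exp_ne_zero _), Real.log_exp, Real.log_exp]
      at hlogineq
    have ht0d : t0 * (sInf S - a) = Real.log p - 1 := by
      rw [ht0]; exact div_mul_cancel₀ _ hdneg.ne
    have hx : t0 * sInf S = t0 * a + (Real.log p - 1) := by
      rw [← ht0d]; ring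
    linarith


end Paper
end
end

section
/- Let ρ be a positively homogeneous monetary risk measure on 𝒳 such that ρ(𝟙_A) = 0 for every event A ∈ 𝓕 with ℙ(A) < 1. Then ρ equals the worst-case risk measure: ρ(X) = ρ^w(X) = ess sup(−X) for all X ∈ 𝒳. -/
open MeasureTheory Filter Set

noncomputable section

namespace Paper

variable {Ω : Type*} [MeasurableSpace Ω]

/-- A positively homogeneous monetary risk measure vanishing on
all indicators `𝟙_A` with `P(A) < 1` is the worst-case risk measure. -/
theorem statement19 (P : Measure Ω) [IsProbabilityMeasure P] (hP : Atomless P)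
    (ρ : (Ω → ℝ) → ℝ) (hρ : IsRiskMeasure P ρ)
    (hph : ∀ X : Ω → ℝ, MemX P X → ∀ t : ℝ, 0 < t →
      ρ (fun ω => t * X ω) = t * ρ X)
    (hind : ∀ A : Set Ω, MeasurableSet A → P A < 1 →
      ρ (A.indicator fun _ => (1 : ℝ)) = 0) :
    ∀ X : Ω → ℝ, MemX P X → ρ X = rhoW P X := by
  intro X hX
  obtain ⟨hXm, C, hC⟩ := hX
  set S := {m : ℝ | ∀ᵐ ω ∂P, -X ω ≤ m} with hSdef
  have hCS : C ∈ S := hC.mono (fun ω h => by rw [abs_le] at h; linarith)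
  have hSne : S.Nonempty := ⟨C, hCS⟩
  have hbdd : BddBelow S := by
    refine ⟨-C, fun m hm => ?_⟩
    obtain ⟨ω, h1, h2⟩ := (hC.and hm).exists
    rw [abs_le] at h1; linarith
  set M := sInf S with hMdef
  have hrw : rhoW P X = M := rfl
  -- ρ of constants
  have h0X : MemX P (fun _ : Ω => (0:ℝ)) :=
    ⟨measurable_const, 0, ae_of_all _ fun ω => by simp⟩
  have hρ0 : ρ (fun _ => (0:ℝ)) = 0 := by
    have h := hph _ h0X 2 two_pos
    simp only [mul_zero] at h
    linarith
  have hconst : ∀ c : ℝ, ρ (fun _ => c) = -c := by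
    intro c
    have h := hρ.2 (fun _ => 0) h0X c
    simp only [zero_add] at h
    rw [h, hρ0]; ring
  have hconstX : ∀ c : ℝ, MemX P (fun _ : Ω => c) :=
    fun c => ⟨measurable_const, |c|, ae_of_all _ fun ω => le_refl _⟩
  -- M is an a.e. upper bound of -X
  have hM_ae : ∀ᵐ ω ∂P, -X ω ≤ M := by
    have h : ∀ n : ℕ, ∀ᵐ ω ∂P, -X ω ≤ M + 1/(n+1) := by
      intro n
      have hlt : M < M + 1/((n:ℝ)+1) := lt_add_of_pos_right M (by positivity)
      obtain ⟨m, hmS, hmlt⟩ := exists_lt_of_csInf_lt hSne hlt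
      have hmS' : ∀ᵐ ω ∂P, -X ω ≤ m := hmS
      exact hmS'.mono fun ω h => h.trans hmlt.le
    rw [← ae_all_iff] at h
    refine h.mono fun ω hω => ?_
    by_contra hc
    push_neg at hc
    obtain ⟨n, hn⟩ := exists_nat_one_div_lt (sub_pos.mpr hc)
    have := hω n
    linarith
  -- upper bound : ρ X ≤ M
  have hup : ρ X ≤ M := by
    have h := hρ.1 (fun _ => -M) X (hconstX (-M)) ⟨hXm, C, hC⟩
      (hM_ae.mono fun ω h => show -M ≤ X ω by linarith)
    rw [hconst] at h
    linarith
  -- lower bound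
  have hlow : ∀ ε : ℝ, 0 < ε → M - ε ≤ ρ X := by
    intro ε hε
    set A := {ω | X ω < -(M - ε)} with hAdef
    have hAmeas : MeasurableSet A := measurableSet_lt hXm measurable_const
    have hApos : 0 < P A := by
      by_contra h
      push_neg at h
      have hA0 : P A = 0 := le_antisymm h (by simp)
      have hnm : ∀ᵐ ω ∂P, ω ∉ A := by
        rw [ae_iff]
        simpa using hA0
      have hmem : M - ε ∈ S := by
        refine hnm.mono fun ω hω => ?_
        simp only [hAdef, Set.mem_setOf_eq, not_lt] at hω
        linarith
      have := csInf_le hbdd hmem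
      linarith
    have hC0 : 0 ≤ C := by
      obtain ⟨ω, h⟩ := hC.exists
      exact (abs_nonneg _).trans h
    set t := C + |M| + 1 with htdef
    have htpos : 0 < t := by positivity
    have hPAc : P Aᶜ < 1 := by
      rw [prob_compl_eq_one_sub hAmeas]
      exact ENNReal.sub_lt_self ENNReal.one_ne_top one_ne_zero hApos.ne'
    have hind0 : ρ (Aᶜ.indicator fun _ => (1:ℝ)) = 0 := hind Aᶜ hAmeas.compl hPAc
    have hindX : MemX P (Aᶜ.indicator fun _ => (1:ℝ)) :=
      ⟨measurable_const.indicator hAmeas.compl, 1, ae_of_all _ fun ω => by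
        by_cases hω : ω ∈ Aᶜ <;> simp [Set.indicator_apply, hω]⟩
    have hZ0 : ρ (fun ω => t * Aᶜ.indicator (fun _ => (1:ℝ)) ω) = 0 := by
      rw [hph _ hindX t htpos, hind0, mul_zero]
    have hZX : MemX P (fun ω => t * Aᶜ.indicator (fun _ => (1:ℝ)) ω) := by
      refine ⟨measurable_const.mul hindX.1, t, ae_of_all _ fun ω => ?_⟩
      by_cases hω : ω ∈ Aᶜ <;>
        simp [Set.indicator_apply, hω, abs_of_pos htpos, abs_of_nonneg htpos.le,
          htpos.le]
    have hYX : MemX P (fun ω => t * Aᶜ.indicator (fun _ => (1:ℝ)) ω + (-(M - ε))) := by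
      refine ⟨hZX.1.add measurable_const, t + |M - ε|, ae_of_all _ fun ω => ?_⟩
      have h1 : |t * Aᶜ.indicator (fun _ => (1:ℝ)) ω| ≤ t := by
        by_cases hω : ω ∈ Aᶜ <;>
          simp [Set.indicator_apply, hω, abs_of_pos htpos, htpos.le]
      calc |t * Aᶜ.indicator (fun _ => (1:ℝ)) ω + (-(M - ε))|
          ≤ |t * Aᶜ.indicator (fun _ => (1:ℝ)) ω| + |(-(M - ε))| := abs_add_le _ _
        _ ≤ t + |M - ε| := by rw [abs_neg]; linarith
    have hXY : ∀ᵐ ω ∂P, X ω ≤ t * Aᶜ.indicator (fun _ => (1:ℝ)) ω + (-(M - ε)) := by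
      refine hC.mono fun ω hω => ?_
      by_cases hωA : ω ∈ A
      · have h1 : ω ∉ Aᶜ := by simpa using hωA
        have h2 : X ω < -(M - ε) := hωA
        simp only [Set.indicator_of_notMem h1, mul_zero, zero_add]
        linarith
      · have h1 : ω ∈ Aᶜ := hωA
        rw [abs_le] at hω
        have h2 : M ≤ |M| := le_abs_self M
        simp only [Set.indicator_of_mem h1, mul_one]
        linarith
    have hmono := hρ.1 X _ ⟨hXm, C, hC⟩ hYX hXY
    have hcash := hρ.2 _ hZX (-(M - ε))
    rw [hcash, hZ0] at hmono
    linarith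
  rw [hrw]
  refine le_antisymm hup ?_
  by_contra h
  push_neg at h
  have := hlow ((M - ρ X) / 2) (by linarith)
  linarith

end Paper
end
end
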